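/- arXiv:2011.08667 — 7 statements merged into one kernel-verified Lean document; each statement's English description precedes it below -/
import Mathlib

section
/- For Re(s) > N, the N-fold multiple Hurwitz zeta function satisfies ζ_N(s,x) = (1/(N-1)!) · Σ_{k=0}^{N-1} (C_{N,x}^{(k)}(0)/k!) · ζ(s-k, x), where C_{N,x}(t) = (t-x+N-1)(t-x+N-2)···(t-x+1) for N ≥ 2 (and C_{1,x}(t)=1), C_{N,x}^{(k)} denotes the k-th derivative of this polynomial, and ζ(s,x) is the Hurwitz zeta function. -/
set_option maxHeartbeats 1000000


open Finset

private lemma mhz_re_pos {x : ℂ} (hx : 0 < x.re) (m : ℕ) : 0 < (x + m).re := by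
  simp only [Complex.add_re, Complex.natCast_re]
  positivity

private lemma mhz_ne_zero {x : ℂ} (hx : 0 < x.re) (m : ℕ) : x + m ≠ 0 := fun h => by
  have := mhz_re_pos hx m
  rw [h] at this
  simp at this

private lemma mhz_summable_norm {x : ℂ} (hx : 0 < x.re) {w : ℂ} (hw : 1 < w.re) :
    Summable fun n : ℕ => ‖(x + n) ^ (-w)‖ := by
  have hmaj : Summable fun n : ℕ =>
      (1 / |(n : ℝ) + x.re| ^ w.re) * Real.exp (Real.pi * |w.im|) :=
    ((Real.summable_one_div_nat_add_rpow x.re w.re).mpr hw).mul_right _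
  refine hmaj.of_nonneg_of_le (fun n => norm_nonneg _) fun n => ?_
  have hne := mhz_ne_zero hx n
  have hre := mhz_re_pos hx n
  have habs : 0 < ‖x + n‖ := by
    simpa using norm_pos_iff.mpr hne
  rw [Complex.norm_cpow_of_ne_zero hne, div_eq_mul_inv, ← Real.exp_neg]
  have h1 : ‖x + n‖ ^ (-w).re ≤ 1 / |(n : ℝ) + x.re| ^ w.re := by
    have hb : |(n : ℝ) + x.re| = ((n : ℝ) + x.re) := abs_of_pos (by positivity)
    have hle : ((n : ℝ) + x.re) ≤ ‖x + n‖ := by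
      have := Complex.re_le_norm (x + n)
      simpa only [Complex.add_re, Complex.natCast_re, add_comm] using this
    have h2 : |(n : ℝ) + x.re| ^ w.re ≤ ‖x + n‖ ^ w.re := by
      rw [hb]
      exact Real.rpow_le_rpow (by positivity) hle (by linarith)
    rw [Complex.neg_re, Real.rpow_neg habs.le, one_div]
    exact inv_anti₀ (by rw [hb]; positivity) h2
  have h2 : Real.exp (-(Complex.arg (x + n) * (-w).im)) ≤ Real.exp (Real.pi * |w.im|) := by
    apply Real.exp_le_exp.mpr
    calc -(Complex.arg (x + n) * (-w).im) ≤ |(-(Complex.arg (x + n) * (-w).im))| := le_abs_self _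
      _ = |Complex.arg (x + n)| * |w.im| := by
          rw [abs_neg, abs_mul, Complex.neg_im, abs_neg]
      _ ≤ Real.pi * |w.im| :=
          mul_le_mul_of_nonneg_right (Complex.abs_arg_le_pi _) (abs_nonneg _)
  exact mul_le_mul h1 h2 (Real.exp_pos _).le (by positivity)

private lemma mhz_summable {x : ℂ} (hx : 0 < x.re) {w : ℂ} (hw : 1 < w.re) :
    Summable fun n : ℕ => (x + n) ^ (-w) :=
  (mhz_summable_norm hx hw).of_norm

private lemma mhz_prod_nat (N m : ℕ) :
    ∏ i ∈ Finset.Icc 1 N, (m + i) = (m + 1).ascFactorial N := by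
  induction N with
  | zero => simp
  | succ k ih =>
      rw [Finset.prod_Icc_succ_top (by omega), ih, Nat.ascFactorial_succ, mul_comm]
      congr 1
      omega

private lemma mhz_card (N m : ℕ) (hN : 0 < N) :
    (Nat.antidiagonalTuple N m).card * (N - 1).factorial
      = ∏ i ∈ Finset.Icc 1 (N - 1), (m + i) := by
  have h1 : Nat.antidiagonalTuple N m = Finset.piAntidiag (univ : Finset (Fin N)) m :=
    (Finset.piAntidiag_univ_fin_eq_antidiagonalTuple m N).symm
  have h2 : (Finset.piAntidiag (univ : Finset (Fin N)) m).card
      = Fintype.card (Sym (Fin N) m) := by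
    classical
    rw [← Finset.map_sym_eq_piAntidiag, Finset.card_map, Finset.sym_univ, Finset.card_univ]
  have h3 : Fintype.card (Sym (Fin N) m) = (N + m - 1).choose m := by
    rw [Sym.card_sym_eq_choose, Fintype.card_fin]
  rw [mhz_prod_nat, Nat.ascFactorial_eq_factorial_mul_choose, h1, h2, h3]
  have h4 : (N + m - 1).choose m = (m + (N - 1)).choose (N - 1) := by
    have h5 : m + (N - 1) - m = N - 1 := by omega
    have := Nat.choose_symm (n := m + (N - 1)) (k := m) (by omega)
    rw [h5] at this
    rw [this]
    congr 1
    omega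
  rw [h4, mul_comm]

/-- Multiple Hurwitz zeta expressed via Hurwitz zeta and the polynomial `C_{N,x}`. -/
theorem multiple_hurwitz_eq_linear_combination
    (N : ℕ) (hN : 0 < N) (x : ℂ) (hx : 0 < x.re) (s : ℂ) (hs : (N : ℝ) < s.re) :
    (∑' n : Fin N → ℕ, (x + ∑ i, (n i : ℂ)) ^ (-s)) =
      (1 / ((N - 1).factorial : ℂ)) * ∑ k ∈ Finset.range N,
        ((Polynomial.derivative^[k]
            (∏ i ∈ Finset.Icc 1 (N - 1), (Polynomial.X + Polynomial.C ((i : ℂ) - x)))).eval 0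
          / ((k.factorial : ℂ))) *
          ∑' n : ℕ, ((n : ℂ) + x) ^ (-(s - (k : ℂ))) := by
  classical
  set p : Polynomial ℂ := ∏ i ∈ Finset.Icc 1 (N - 1), (Polynomial.X + Polynomial.C ((i : ℂ) - x))
    with hp
  set f : ℕ → ℂ := fun m => (x + m) ^ (-s) with hf
  -- degree bound
  have hdeg : p.natDegree < N := by
    have h1 : p.natDegree ≤ ∑ i ∈ Finset.Icc 1 (N - 1),
        (Polynomial.X + Polynomial.C ((i : ℂ) - x)).natDegree := Polynomial.natDegree_prod_le _ _
    have h2 : ∀ i ∈ Finset.Icc 1 (N - 1),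
        (Polynomial.X + Polynomial.C ((i : ℂ) - x)).natDegree = 1 := fun i _ =>
      Polynomial.natDegree_X_add_C _
    rw [Finset.sum_congr rfl h2] at h1
    simp only [Finset.sum_const, Nat.card_Icc, smul_eq_mul, mul_one] at h1
    omega
  -- evaluation of p at x + m
  have heval : ∀ m : ℕ, p.eval (x + m) = ∏ i ∈ Finset.Icc 1 (N - 1), ((m : ℂ) + i) := by
    intro m
    rw [hp, Polynomial.eval_prod]
    refine Finset.prod_congr rfl fun i _ => ?_
    simp only [Polynomial.eval_add, Polynomial.eval_X, Polynomial.eval_C]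
    ring
  -- derivative / coefficient relation
  have hcoeff : ∀ k : ℕ, (Polynomial.derivative^[k] p).eval 0 = (k.factorial : ℂ) * p.coeff k := by
    intro k
    rw [← Polynomial.coeff_zero_eq_eval_zero, Polynomial.coeff_iterate_derivative]
    simp [Nat.descFactorial_self, nsmul_eq_mul]
  -- summability of each power term
  have hwk : ∀ k ∈ Finset.range N, (1 : ℝ) < (s - k).re := by
    intro k hk
    rw [Finset.mem_range] at hk
    have : (k : ℝ) ≤ (N : ℝ) - 1 := by
      have : (k : ℝ) + 1 ≤ (N : ℝ) := by exact_mod_cast hk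
      linarith
    simp only [Complex.sub_re, Complex.natCast_re]
    linarith
  have hpow : ∀ m : ℕ, ∀ k : ℕ, (x + m) ^ (-(s - (k : ℂ))) = (x + m) ^ (k : ℕ) * f m := by
    intro m k
    have hne := mhz_ne_zero hx m
    have : -(s - (k : ℂ)) = (k : ℂ) + (-s) := by ring
    rw [this, Complex.cpow_add _ _ hne, Complex.cpow_natCast]
  have hsumk : ∀ k ∈ Finset.range N, Summable fun m : ℕ => (x + m) ^ (k : ℕ) * f m := by
    intro k hk
    refine (mhz_summable hx (hwk k hk)).congr fun m => (hpow m k)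
  -- the key pointwise identity
  have hfac_ne : ((N - 1).factorial : ℂ) ≠ 0 := by
    exact_mod_cast (N - 1).factorial_ne_zero
  have hP : ∀ m : ℕ, ((Nat.antidiagonalTuple N m).card : ℂ) * f m
      = (1 / ((N - 1).factorial : ℂ)) *
        ∑ k ∈ Finset.range N, p.coeff k * ((x + m) ^ (k : ℕ) * f m) := by
    intro m
    have h1 : ∑ k ∈ Finset.range N, p.coeff k * ((x + m) ^ (k : ℕ) * f m)
        = (∑ k ∈ Finset.range N, p.coeff k * (x + m) ^ (k : ℕ)) * f m := by
      rw [Finset.sum_mul]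
      exact Finset.sum_congr rfl fun k _ => (mul_assoc _ _ _).symm
    have h2 : ∑ k ∈ Finset.range N, p.coeff k * (x + m) ^ (k : ℕ) = p.eval (x + m) :=
      (Polynomial.eval_eq_sum_range' hdeg _).symm
    have h3 : p.eval (x + m) = ((Nat.antidiagonalTuple N m).card : ℂ) *
        ((N - 1).factorial : ℂ) := by
      rw [heval m]
      have := mhz_card N m hN
      calc ∏ i ∈ Finset.Icc 1 (N - 1), ((m : ℂ) + i)
          = ((∏ i ∈ Finset.Icc 1 (N - 1), (m + i) : ℕ) : ℂ) := by push_cast; ring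
        _ = ((Nat.antidiagonalTuple N m).card : ℂ) * ((N - 1).factorial : ℂ) := by
            rw [← this]; push_cast; ring
    rw [h1, h2, h3]
    field_simp
  -- summability of m ↦ card * f m
  have hG : Summable fun m : ℕ => ((Nat.antidiagonalTuple N m).card : ℂ) * f m := by
    refine Summable.congr ?_ fun m => (hP m).symm
    exact Summable.mul_left _ (summable_sum fun k hk => (hsumk k hk).mul_left _)
  have hGnorm : Summable fun m : ℕ => ((Nat.antidiagonalTuple N m).card : ℝ) * ‖f m‖ := by
    have := (summable_norm_iff.mpr hG)
    refine this.congr fun m => ?_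
    rw [norm_mul, Complex.norm_natCast]
  -- fiber setup
  haveI instFib : ∀ m : ℕ, Fintype {n : Fin N → ℕ // ∑ i, n i = m} := fun m =>
    Fintype.subtype (Nat.antidiagonalTuple N m) fun n => Nat.mem_antidiagonalTuple
  have hcard : ∀ m : ℕ, Nat.card {n : Fin N → ℕ // ∑ i, n i = m}
      = (Nat.antidiagonalTuple N m).card := fun m => by
    rw [Nat.card_eq_fintype_card,
      Fintype.card_of_subtype (Nat.antidiagonalTuple N m) fun n => Nat.mem_antidiagonalTuple]
  -- summability on the sigma type
  have hFs : Summable fun q : Σ m : ℕ, {n : Fin N → ℕ // ∑ i, n i = m} => ‖f q.1‖ := by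
    refine (summable_sigma_of_nonneg fun q => norm_nonneg _).mpr
      ⟨fun m => Summable.of_finite, ?_⟩
    refine hGnorm.congr fun m => ?_
    calc ((Nat.antidiagonalTuple N m).card : ℝ) * ‖f m‖
        = Nat.card {n : Fin N → ℕ // ∑ i, n i = m} • ‖f m‖ := by
          rw [hcard m, nsmul_eq_mul]
      _ = ∑' _y : {n : Fin N → ℕ // ∑ i, n i = m}, ‖f m‖ := (tsum_const _).symm
  have hFsig : Summable fun q : Σ m : ℕ, {n : Fin N → ℕ // ∑ i, n i = m} => f q.1 :=
    hFs.of_norm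
  -- LHS computation
  have hLHS : (∑' n : Fin N → ℕ, (x + ∑ i, (n i : ℂ)) ^ (-s))
      = ∑' m : ℕ, ((Nat.antidiagonalTuple N m).card : ℂ) * f m := by
    calc (∑' n : Fin N → ℕ, (x + ∑ i, (n i : ℂ)) ^ (-s))
        = ∑' n : Fin N → ℕ, f (∑ i, n i) := by
          refine tsum_congr fun n => ?_
          rw [hf]
          push_cast
          ring_nf
      _ = ∑' q : Σ m : ℕ, {n : Fin N → ℕ // ∑ i, n i = m}, f q.1 := by
          rw [← Equiv.tsum_eq (Equiv.sigmaFiberEquiv (fun n : Fin N → ℕ => ∑ i, n i))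
              (fun n : Fin N → ℕ => f (∑ i, n i))]
          exact tsum_congr fun q => congrArg f q.snd.prop
      _ = ∑' m : ℕ, ∑' _c : {n : Fin N → ℕ // ∑ i, n i = m}, f m := hFsig.tsum_sigma
      _ = ∑' m : ℕ, ((Nat.antidiagonalTuple N m).card : ℂ) * f m := by
          refine tsum_congr fun m => ?_
          rw [tsum_const, hcard m, nsmul_eq_mul]
  rw [hLHS]
  -- RHS computation
  have hζ : ∀ k ∈ Finset.range N, (∑' n : ℕ, ((n : ℂ) + x) ^ (-(s - (k : ℂ))))
      = ∑' m : ℕ, (x + m) ^ (k : ℕ) * f m := by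
    intro k hk
    refine tsum_congr fun m => ?_
    rw [add_comm ((m : ℂ)) x, hpow m k]
  calc ∑' m : ℕ, ((Nat.antidiagonalTuple N m).card : ℂ) * f m
      = ∑' m : ℕ, (1 / ((N - 1).factorial : ℂ)) *
          ∑ k ∈ Finset.range N, p.coeff k * ((x + m) ^ (k : ℕ) * f m) :=
        tsum_congr fun m => hP m
    _ = (1 / ((N - 1).factorial : ℂ)) *
          ∑' m : ℕ, ∑ k ∈ Finset.range N, p.coeff k * ((x + m) ^ (k : ℕ) * f m) :=
        tsum_mul_left
    _ = (1 / ((N - 1).factorial : ℂ)) *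
          ∑ k ∈ Finset.range N, ∑' m : ℕ, p.coeff k * ((x + m) ^ (k : ℕ) * f m) := by
        rw [Summable.tsum_finsetSum fun k hk => (hsumk k hk).mul_left _]
    _ = (1 / ((N - 1).factorial : ℂ)) * ∑ k ∈ Finset.range N,
          ((Polynomial.derivative^[k] p).eval 0 / (k.factorial : ℂ)) *
          ∑' n : ℕ, ((n : ℂ) + x) ^ (-(s - (k : ℂ))) := by
        congr 1
        refine Finset.sum_congr rfl fun k hk => ?_
        have hkfac : ((k.factorial : ℂ)) ≠ 0 := by exact_mod_cast k.factorial_ne_zero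
        have hck : (Polynomial.derivative^[k] p).eval 0 / (k.factorial : ℂ) = p.coeff k := by
          rw [hcoeff k]
          field_simp
        rw [hζ k hk, hck]
        exact tsum_mul_left (a := p.coeff k) (f := fun m : ℕ => (x + m) ^ (k : ℕ) * f m)
end

section
/- Let w_1 = r_1/q_1, …, w_N = r_N/q_N be positive rationals (r_i, q_i positive integers, not necessarily coprime). Let q be any common multiple of q_1,…,q_N, and ℓ any common multiple of the integers q·w_1,…,q·w_N. Set ℓ_i := ℓ/(q·w_i) ∈ ℤ. Then for Re(s) > N and Re(x) > 0, ζ_N(s, x | w_1,…,w_N) = (q/ℓ)^s · Σ_{k_1=0}^{ℓ_1-1} ⋯ Σ_{k_N=0}^{ℓ_N-1} ζ_N(s, (q/ℓ)(x + k_1 w_1 + ⋯ + k_N w_N)), where the right side involves the multiple Hurwitz zeta function with all periods equal to 1. -/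
open Finset

lemma aux_summable_pi_rpow (N : ℕ) {p : ℝ} (hp : 1 < p) :
    Summable fun n : Fin N → ℕ => ∏ i, ((1 : ℝ) + n i) ^ (-p) := by
  induction N with
  | zero =>
    exact Summable.of_finite
  | succ n ih =>
    have hbase : Summable fun a : ℕ => ((1 : ℝ) + a) ^ (-p) := by
      have h1 : Summable fun a : ℕ => ((a : ℝ)) ^ (-p) :=
        Real.summable_nat_rpow.mpr (by linarith)
      have h2 := h1.comp_injective (add_left_injective 1)
      refine h2.congr fun a => ?_
      simp only [Function.comp]
      push_cast
      ring_nf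
    have key := (hbase.mul_of_nonneg ih (fun a => Real.rpow_nonneg (by positivity) _)
      (fun m => Finset.prod_nonneg fun i _ => Real.rpow_nonneg (by positivity) _))
    refine (Equiv.summable_iff (Fin.consEquiv fun _ => ℕ)).mp (key.congr fun ⟨a, m⟩ => ?_)
    simp only [Function.comp, Fin.consEquiv_apply]
    rw [Fin.prod_univ_succ]
    simp

lemma aux_summable_real {N : ℕ} (hN : 0 < N) {w : Fin N → ℝ} (hw : ∀ i, 0 < w i)
    {a : ℝ} (ha : 0 < a) {σ : ℝ} (hσ : (N : ℝ) < σ) :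
    Summable fun n : Fin N → ℕ => (a + ∑ i, (n i : ℝ) * w i) ^ (-σ) := by
  have hN' : (0 : ℝ) < N := by exact_mod_cast hN
  have hσ0 : 0 < σ := hN'.trans hσ
  haveI : Nonempty (Fin N) := Fin.pos_iff_nonempty.mp hN
  set c : ℝ := min a (Finset.univ.inf' univ_nonempty w) with hc
  have hc0 : 0 < c := lt_min ha (by
    rw [Finset.lt_inf'_iff]
    exact fun i _ => hw i)
  have hcw : ∀ i, c ≤ w i := fun i =>
    (min_le_right _ _).trans (Finset.inf'_le _ (mem_univ i))
  have hp : 1 < σ / N := (one_lt_div hN').mpr hσ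
  have hsum := (aux_summable_pi_rpow N hp).mul_left (c ^ (-σ))
  refine Summable.of_nonneg_of_le
    (fun n => Real.rpow_nonneg (add_nonneg ha.le
      (Finset.sum_nonneg fun i _ => mul_nonneg (Nat.cast_nonneg _) (hw i).le)) _)
    (fun n => ?_) hsum
  have hz : ∀ i, (0:ℝ) ≤ 1 + (n i : ℝ) := fun i => by positivity
  have hgm : ∏ i, ((1 : ℝ) + n i) ^ ((1:ℝ)/N) ≤ 1 + ∑ i, (n i : ℝ) := by
    have h := Real.geom_mean_le_arith_mean_weighted univ (fun _ => (1:ℝ)/N)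
      (fun i => (1:ℝ) + n i) (fun i _ => by positivity)
      (by rw [Finset.sum_const]; simp; field_simp) (fun i _ => hz i)
    refine h.trans ?_
    have heq : ∑ i, (1:ℝ)/N * (1 + n i) = 1 + (∑ i, (n i:ℝ))/N := by
      rw [← Finset.mul_sum, Finset.sum_add_distrib, Finset.sum_const]
      simp only [card_univ, Fintype.card_fin, nsmul_eq_mul, mul_one]
      field_simp
    rw [heq]
    gcongr
    exact div_le_self (Finset.sum_nonneg fun i _ => Nat.cast_nonneg _)
      (by exact_mod_cast hN)
  have hP0 : 0 < ∏ i, ((1 : ℝ) + n i) ^ ((1:ℝ)/N) :=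
    Finset.prod_pos fun i _ => Real.rpow_pos_of_pos (by positivity) _
  have h2 : c * ∏ i, ((1 : ℝ) + n i) ^ ((1:ℝ)/N) ≤ a + ∑ i, (n i : ℝ) * w i := by
    calc c * ∏ i, ((1 : ℝ) + n i) ^ ((1:ℝ)/N)
        ≤ c * (1 + ∑ i, (n i : ℝ)) := by
          exact mul_le_mul_of_nonneg_left hgm hc0.le
      _ = c + ∑ i, (n i : ℝ) * c := by rw [← Finset.sum_mul, mul_add, mul_one, mul_comm]
      _ ≤ a + ∑ i, (n i : ℝ) * w i := by
          gcongr with i hi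
          · exact min_le_left _ _
          · exact hcw i
  calc (a + ∑ i, (n i : ℝ) * w i) ^ (-σ)
      ≤ (c * ∏ i, ((1 : ℝ) + n i) ^ ((1:ℝ)/N)) ^ (-σ) :=
        Real.rpow_le_rpow_of_nonpos (by positivity) h2 (neg_nonpos.mpr hσ0.le)
    _ = c ^ (-σ) * ∏ i, ((1 : ℝ) + n i) ^ (-(σ/N)) := by
        rw [Real.mul_rpow hc0.le hP0.le, ← Real.finset_prod_rpow _ _
          (fun i _ => Real.rpow_nonneg (hz i) _)]
        congr 1
        refine Finset.prod_congr rfl fun i _ => ?_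
        rw [← Real.rpow_mul (hz i)]
        congr 1
        field_simp

lemma aux_ofReal_mul_cpow {a : ℝ} (ha : 0 < a) {z : ℂ} (hz : z ≠ 0) (s : ℂ) :
    ((a : ℂ) * z) ^ s = (a : ℂ) ^ s * z ^ s := by
  have ha' : (a : ℂ) ≠ 0 := Complex.ofReal_ne_zero.mpr ha.ne'
  rw [Complex.cpow_def_of_ne_zero (mul_ne_zero ha' hz), Complex.cpow_def_of_ne_zero ha',
    Complex.cpow_def_of_ne_zero hz, ← Complex.exp_add, ← add_mul,
    Complex.log_ofReal_mul ha hz, Complex.ofReal_log ha.le]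

lemma aux_summable_complex {N : ℕ} (hN : 0 < N) {w : Fin N → ℝ} (hw : ∀ i, 0 < w i)
    {x : ℂ} (hx : 0 < x.re) {s : ℂ} (hs : (N : ℝ) < s.re) :
    Summable fun n : Fin N → ℕ => (x + ∑ i, (n i : ℂ) * (w i : ℂ)) ^ (-s) := by
  have hσ0 : 0 < s.re := lt_of_le_of_lt (by exact_mod_cast hN.le.trans (le_refl N)) hs
  have hσ0' : (0:ℝ) < s.re := by
    have : (0:ℝ) < N := by exact_mod_cast hN
    linarith
  have hsum := (aux_summable_real hN hw hx hs).mul_left (Real.exp (Real.pi * |s.im|))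
  refine Summable.of_norm_bounded hsum fun n => ?_
  set z : ℂ := x + ∑ i, (n i : ℂ) * (w i : ℂ) with hzdef
  have hre : z.re = x.re + ∑ i, (n i : ℝ) * w i := by
    have : z = x + ((∑ i, (n i : ℝ) * w i : ℝ) : ℂ) := by push_cast [hzdef]; ring
    rw [this, Complex.add_re, Complex.ofReal_re]
  have hrepos : 0 < z.re := by
    rw [hre]
    exact add_pos_of_pos_of_nonneg hx
      (Finset.sum_nonneg fun i _ => mul_nonneg (Nat.cast_nonneg _) (hw i).le)
  have hz : z ≠ 0 := fun h => by simp [h] at hrepos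
  have habs : ‖z ^ (-s)‖ = ‖z‖ ^ (-s.re) * Real.exp (z.arg * s.im) := by
    rw [Complex.norm_cpow_of_ne_zero hz]
    simp only [Complex.neg_re, Complex.neg_im]
    rw [div_eq_mul_inv, ← Real.exp_neg]
    ring_nf
  rw [habs]
  have h1 : ‖z‖ ^ (-s.re) ≤ z.re ^ (-s.re) :=
    Real.rpow_le_rpow_of_nonpos hrepos (Complex.re_le_norm z) (neg_nonpos.mpr hσ0'.le)
  have h2 : Real.exp (z.arg * s.im) ≤ Real.exp (Real.pi * |s.im|) := by
    apply Real.exp_le_exp.mpr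
    calc z.arg * s.im ≤ |z.arg * s.im| := le_abs_self _
      _ = |z.arg| * |s.im| := abs_mul _ _
      _ ≤ Real.pi * |s.im| := by
          exact mul_le_mul_of_nonneg_right (Complex.abs_arg_le_pi z) (abs_nonneg _)
  calc ‖z‖ ^ (-s.re) * Real.exp (z.arg * s.im)
      ≤ z.re ^ (-s.re) * Real.exp (Real.pi * |s.im|) := by
        exact mul_le_mul h1 h2 (Real.exp_pos _).le (Real.rpow_nonneg hrepos.le _)
    _ = Real.exp (Real.pi * |s.im|) * (x.re + ∑ i, (n i : ℝ) * w i) ^ (-s.re) := by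
        rw [hre]; ring

/-- Lemma 2.1: the Barnes zeta function with rational periods `w i = r i / q i` as a
finite sum of multiple Hurwitz zeta functions, for any common multiple `Q` of the `q i`
and any common multiple `L` of the integers `Q * w i`. -/
theorem barnes_zeta_rational_periods
    (N : ℕ) (hN : 0 < N) (r q : Fin N → ℕ) (hr : ∀ i, 0 < r i) (hq : ∀ i, 0 < q i)
    (Q L : ℕ) (hQ0 : 0 < Q) (hL0 : 0 < L)
    (hQ : ∀ i, q i ∣ Q) (hL : ∀ i, (Q * r i) / q i ∣ L)
    (x : ℂ) (hx : 0 < x.re) (s : ℂ) (hs : (N : ℝ) < s.re) :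
    (∑' n : Fin N → ℕ, (x + ∑ i, (n i : ℂ) * ((r i : ℂ) / (q i : ℂ))) ^ (-s)) =
      ((Q : ℂ) / (L : ℂ)) ^ s *
        ∑ k ∈ Fintype.piFinset (fun i => Finset.range (L / ((Q * r i) / q i))),
          ∑' n : Fin N → ℕ,
            (((Q : ℂ) / (L : ℂ)) * (x + ∑ i, (k i : ℂ) * ((r i : ℂ) / (q i : ℂ)))
              + ∑ i, (n i : ℂ)) ^ (-s) := by
  have hQ0' : ((Q : ℂ)) ≠ 0 := Nat.cast_ne_zero.mpr hQ0.ne'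
  have hL0' : ((L : ℂ)) ≠ 0 := Nat.cast_ne_zero.mpr hL0.ne'
  have hq' : ∀ i, ((q i : ℂ)) ≠ 0 := fun i => Nat.cast_ne_zero.mpr (hq i).ne'
  set ℓ : Fin N → ℕ := fun i => L / ((Q * r i) / q i) with hℓdef
  have hd : ∀ i, 0 < (Q * r i) / q i := fun i =>
    Nat.div_pos (le_trans (Nat.le_of_dvd hQ0 (hQ i)) (Nat.le_mul_of_pos_right Q (hr i)))
      (hq i)
  have hℓpos : ∀ i, 0 < ℓ i := fun i => Nat.div_pos (Nat.le_of_dvd hL0 (hL i)) (hd i)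
  have hdL : ∀ i, ((Q * r i) / q i) * ℓ i = L := fun i => Nat.mul_div_cancel' (hL i)
  have hqdvd : ∀ i, q i ∣ Q * r i := fun i => (hQ i).mul_right (r i)
  have hkey : ∀ i, (ℓ i : ℂ) * ((r i : ℂ) / (q i : ℂ)) = (L : ℂ) / (Q : ℂ) := by
    intro i
    have h1 : (((Q * r i) / q i : ℕ) : ℂ) = (Q : ℂ) * (r i : ℂ) / (q i : ℂ) := by
      rw [Nat.cast_div (hqdvd i) (hq' i)]; push_cast; ring
    have h2 : (((Q * r i) / q i : ℕ) : ℂ) * (ℓ i : ℂ) = (L : ℂ) := by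
      rw [← Nat.cast_mul, hdL i]
    rw [h1] at h2
    rw [div_mul_eq_mul_div, div_eq_iff (hq' i)] at h2
    rw [← mul_div_assoc, div_eq_div_iff (hq' i) hQ0']
    linear_combination h2
  -- positivity of the real weights
  have hwpos : ∀ i, 0 < (r i : ℝ) / (q i : ℝ) := fun i =>
    div_pos (by exact_mod_cast hr i) (by exact_mod_cast hq i)
  have hsum : Summable fun n : Fin N → ℕ =>
      (x + ∑ i, (n i : ℂ) * ((r i : ℂ) / (q i : ℂ))) ^ (-s) := by
    refine (aux_summable_complex hN hwpos hx hs).congr fun n => ?_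
    push_cast
    rfl
  have hrepos : ∀ k : Fin N → ℕ, 0 < (x + ∑ i, (k i : ℂ) * ((r i : ℂ) / (q i : ℂ))).re := by
    intro k
    have heq : (x + ∑ i, (k i : ℂ) * ((r i : ℂ) / (q i : ℂ)))
        = x + ((∑ i, (k i : ℝ) * ((r i : ℝ) / (q i : ℝ)) : ℝ) : ℂ) := by push_cast; ring
    rw [heq, Complex.add_re, Complex.ofReal_re]
    exact add_pos_of_pos_of_nonneg hx
      (Finset.sum_nonneg fun i _ => mul_nonneg (Nat.cast_nonneg _) (hwpos i).le)
  set c : ℝ := (L : ℝ) / (Q : ℝ) with hcdef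
  have hcpos : 0 < c := div_pos (by exact_mod_cast hL0) (by exact_mod_cast hQ0)
  have hcC : ((c : ℝ) : ℂ) = (L : ℂ) / (Q : ℂ) := by rw [hcdef]; push_cast; ring
  have hfac : ((Q : ℂ) / (L : ℂ)) ^ s = ((c : ℝ) : ℂ) ^ (-s) := by
    have hcinv : (((c : ℝ) : ℂ))⁻¹ = (Q : ℂ) / (L : ℂ) := by rw [hcC, inv_div]
    have harg : (((c : ℝ) : ℂ)).arg ≠ Real.pi := by
      rw [Complex.arg_ofReal_of_nonneg hcpos.le]
      exact Real.pi_pos.ne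
    rw [← hcinv, Complex.inv_cpow _ _ harg, ← Complex.cpow_neg]
  -- pointwise identity
  have hpt : ∀ k m : Fin N → ℕ,
      (x + ∑ i, ((k i + ℓ i * m i : ℕ) : ℂ) * ((r i : ℂ) / (q i : ℂ))) ^ (-s)
        = ((Q : ℂ) / (L : ℂ)) ^ s *
            (((Q : ℂ) / (L : ℂ)) * (x + ∑ i, (k i : ℂ) * ((r i : ℂ) / (q i : ℂ)))
              + ∑ i, (m i : ℂ)) ^ (-s) := by
    intro k m
    set u : ℂ := ((Q : ℂ) / (L : ℂ)) * (x + ∑ i, (k i : ℂ) * ((r i : ℂ) / (q i : ℂ)))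
        + ∑ i, (m i : ℂ) with hu
    have hure : 0 < u.re := by
      rw [hu, Complex.add_re,
        show ((Q : ℂ) / (L : ℂ)) = (((Q : ℝ) / (L : ℝ) : ℝ) : ℂ) by push_cast; rfl,
        Complex.re_ofReal_mul,
        show (∑ i, (m i : ℂ)) = ((∑ i, (m i : ℝ) : ℝ) : ℂ) by push_cast; rfl,
        Complex.ofReal_re]
      have hql : (0 : ℝ) < (Q : ℝ) / (L : ℝ) :=
        div_pos (by exact_mod_cast hQ0) (by exact_mod_cast hL0)
      exact add_pos_of_pos_of_nonneg (mul_pos hql (hrepos k))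
        (Finset.sum_nonneg fun i _ => Nat.cast_nonneg _)
    have hune : u ≠ 0 := fun h => by simp [h] at hure
    have hA : x + ∑ i, ((k i + ℓ i * m i : ℕ) : ℂ) * ((r i : ℂ) / (q i : ℂ))
        = ((c : ℝ) : ℂ) * u := by
      rw [hu, hcC]
      have hsplit : ∀ i, ((k i + ℓ i * m i : ℕ) : ℂ) * ((r i : ℂ) / (q i : ℂ))
          = (k i : ℂ) * ((r i : ℂ) / (q i : ℂ)) + ((L : ℂ) / (Q : ℂ)) * (m i : ℂ) := by
        intro i
        push_cast
        rw [add_mul, mul_comm ((ℓ i : ℂ)) ((m i : ℂ)), mul_assoc, hkey i]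
        ring
      rw [Finset.sum_congr rfl fun i _ => hsplit i, Finset.sum_add_distrib, ← Finset.mul_sum]
      field_simp
      ring
    rw [hA, aux_ofReal_mul_cpow hcpos hune (-s), hfac]
  -- the reindexing equivalence
  set E : ((∀ i, Fin (ℓ i)) × (Fin N → ℕ)) ≃ (Fin N → ℕ) :=
    { toFun := fun p => fun i => (p.1 i : ℕ) + ℓ i * p.2 i
      invFun := fun n =>
        (fun i => ⟨n i % ℓ i, Nat.mod_lt _ (hℓpos i)⟩, fun i => n i / ℓ i)
      left_inv := by
        rintro ⟨k, m⟩
        refine Prod.ext (funext fun i => ?_) (funext fun i => ?_)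
        · exact Fin.ext (by simp [Nat.add_mul_mod_self_left, Nat.mod_eq_of_lt (k i).isLt])
        · simp [Nat.add_mul_div_left _ _ (hℓpos i), Nat.div_eq_of_lt (k i).isLt]
      right_inv := by
        intro n
        funext i
        exact Nat.mod_add_div _ _ } with hE
  have hsumE : Summable fun p : (∀ i, Fin (ℓ i)) × (Fin N → ℕ) =>
      (x + ∑ i, ((E p) i : ℂ) * ((r i : ℂ) / (q i : ℂ))) ^ (-s) :=
    E.summable_iff.mpr hsum
  calc (∑' n : Fin N → ℕ, (x + ∑ i, (n i : ℂ) * ((r i : ℂ) / (q i : ℂ))) ^ (-s))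
      = ∑' p : (∀ i, Fin (ℓ i)) × (Fin N → ℕ),
          (x + ∑ i, ((E p) i : ℂ) * ((r i : ℂ) / (q i : ℂ))) ^ (-s) :=
        (E.tsum_eq _).symm
    _ = ∑' (k : ∀ i, Fin (ℓ i)), ∑' (m : Fin N → ℕ),
          (x + ∑ i, ((E (k, m)) i : ℂ) * ((r i : ℂ) / (q i : ℂ))) ^ (-s) :=
        hsumE.tsum_prod' fun k => hsumE.comp_injective (Prod.mk_right_injective k)
    _ = ∑ k : ∀ i, Fin (ℓ i), ∑' (m : Fin N → ℕ),
          (x + ∑ i, ((E (k, m)) i : ℂ) * ((r i : ℂ) / (q i : ℂ))) ^ (-s) :=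
        tsum_fintype _
    _ = ∑ k : ∀ i, Fin (ℓ i), ((Q : ℂ) / (L : ℂ)) ^ s * ∑' (m : Fin N → ℕ),
          (((Q : ℂ) / (L : ℂ)) * (x + ∑ i, ((k i : ℕ) : ℂ) * ((r i : ℂ) / (q i : ℂ)))
            + ∑ i, (m i : ℂ)) ^ (-s) := by
        refine Finset.sum_congr rfl fun k _ => ?_
        rw [← tsum_mul_left]
        refine tsum_congr fun m => ?_
        exact hpt (fun i => (k i : ℕ)) m
    _ = ∑ k ∈ Fintype.piFinset (fun i => Finset.range (ℓ i)),
          ((Q : ℂ) / (L : ℂ)) ^ s * ∑' (m : Fin N → ℕ),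
          (((Q : ℂ) / (L : ℂ)) * (x + ∑ i, (k i : ℂ) * ((r i : ℂ) / (q i : ℂ)))
            + ∑ i, (m i : ℂ)) ^ (-s) := by
        refine Finset.sum_bij (fun k _ => fun i => (k i : ℕ)) ?_ ?_ ?_ ?_
        · intro k _
          simp only [Fintype.mem_piFinset, Finset.mem_range]
          exact fun i => (k i).isLt
        · intro k1 _ k2 _ h
          funext i
          exact Fin.ext (congrFun h i)
        · intro b hb
          simp only [Fintype.mem_piFinset, Finset.mem_range] at hb
          exact ⟨fun i => ⟨b i, hb i⟩, Finset.mem_univ _, rfl⟩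
        · intro k _
          rfl
    _ = ((Q : ℂ) / (L : ℂ)) ^ s *
        ∑ k ∈ Fintype.piFinset (fun i => Finset.range (L / ((Q * r i) / q i))),
          ∑' n : Fin N → ℕ,
            (((Q : ℂ) / (L : ℂ)) * (x + ∑ i, (k i : ℂ) * ((r i : ℂ) / (q i : ℂ)))
              + ∑ i, (n i : ℂ)) ^ (-s) := by
        rw [← Finset.mul_sum]
end

section
/- Let w_1 = r_1/q_1, …, w_N = r_N/q_N be positive rationals in lowest terms (gcd(r_i,q_i)=1), and put w := lcm(r_1,…,r_N)/gcd(q_1,…,q_N) and ℓ_i := w/w_i for each i. Then each ℓ_i is a positive integer, and for Re(s) > N and Re(x) > 0, ζ_N(s, x | w_1,…,w_N) = w^{-s} · Σ_{k_1=0}^{ℓ_1-1} ⋯ Σ_{k_N=0}^{ℓ_N-1} ζ_N(s, w^{-1}(x + k_1 w_1 + ⋯ + k_N w_N)). -/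
open Finset

private lemma ofReal_mul_cpow' {a : ℝ} (ha : 0 < a) {z : ℂ} (hz : z ≠ 0) (w : ℂ) :
    ((a : ℂ) * z) ^ w = (a : ℂ) ^ w * z ^ w := by
  have ha' : (a : ℂ) ≠ 0 := Complex.ofReal_ne_zero.mpr ha.ne'
  rw [Complex.cpow_def_of_ne_zero (mul_ne_zero ha' hz),
    Complex.cpow_def_of_ne_zero ha', Complex.cpow_def_of_ne_zero hz,
    Complex.log_ofReal_mul ha hz, ← Complex.exp_add, ← add_mul,
    Complex.ofReal_log ha.le]

private lemma summable_pi_prod (N : ℕ) (g : ℕ → ℝ) (hg0 : ∀ n, 0 ≤ g n) (hg : Summable g) :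
    Summable (fun n : Fin N → ℕ => ∏ i, g (n i)) := by
  induction N with
  | zero => exact .of_finite
  | succ N ih =>
    have hnn : ∀ p : ℕ × (Fin N → ℕ), 0 ≤ g p.1 * ∏ i, g (p.2 i) :=
      fun p => mul_nonneg (hg0 _) (Finset.prod_nonneg fun i _ => hg0 _)
    have hslice : ∀ a : ℕ, Summable (fun m : Fin N → ℕ => g a * ∏ i, g (m i)) :=
      fun a => ih.mul_left _
    have hsums : Summable (fun a : ℕ => ∑' m : Fin N → ℕ, g a * ∏ i, g (m i)) := by
      have heq : (fun a : ℕ => ∑' m : Fin N → ℕ, g a * ∏ i, g (m i)) =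
          fun a : ℕ => g a * ∑' m : Fin N → ℕ, ∏ i, g (m i) := by
        funext a; exact tsum_mul_left
      rw [heq]
      exact hg.mul_right _
    have h : Summable (fun p : ℕ × (Fin N → ℕ) => g p.1 * ∏ i, g (p.2 i)) :=
      (summable_prod_of_nonneg hnn).mpr ⟨hslice, hsums⟩
    have h2 := (Fin.consEquiv fun _ => ℕ).symm.summable_iff.mpr h
    refine h2.congr fun n => ?_
    simp only [Function.comp, Fin.consEquiv, Equiv.coe_fn_symm_mk]
    rw [Fin.prod_univ_succ]
    rfl

private lemma summable_one_add_sum_rpow (N : ℕ) {t : ℝ} (ht : (N : ℝ) < t) :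
    Summable (fun n : Fin N → ℕ => (1 + ∑ i, (n i : ℝ)) ^ (-t)) := by
  rcases Nat.eq_zero_or_pos N with rfl | hN
  · exact .of_finite
  have hN' : (0 : ℝ) < N := by exact_mod_cast hN
  have htN : 1 < t / N := (one_lt_div hN').mpr ht
  have ht0 : 0 < t := lt_trans hN' ht
  set g : ℕ → ℝ := fun n => ((1 : ℝ) + n) ^ (-(t / N)) with hg_def
  have hg0 : ∀ n, 0 ≤ g n := fun n => Real.rpow_nonneg (by positivity) _
  have hg : Summable g := by
    have h1 : Summable (fun n : ℕ => ((n + 1 : ℕ) : ℝ) ^ (-(t / N))) :=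
      (summable_nat_add_iff 1).mpr (Real.summable_nat_rpow.mpr (by linarith))
    refine h1.congr fun n => ?_
    push_cast
    rw [add_comm]
  refine Summable.of_nonneg_of_le (fun n => Real.rpow_nonneg (by positivity) _) ?_
    (summable_pi_prod N g hg0 hg)
  intro n
  have h1le : ∀ i : Fin N, (1 : ℝ) ≤ 1 + (n i : ℝ) := fun i => le_add_of_nonneg_right (Nat.cast_nonneg _)
  have hSnn : (0 : ℝ) ≤ ∑ i, (n i : ℝ) := Finset.sum_nonneg fun i _ => by positivity
  have hS1 : (0 : ℝ) < 1 + ∑ i, (n i : ℝ) := by positivity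
  have hPpos : (0 : ℝ) < ∏ i : Fin N, (1 + (n i : ℝ)) :=
    Finset.prod_pos fun i _ => by positivity
  have hPle : (∏ i : Fin N, (1 + (n i : ℝ))) ≤ (1 + ∑ i, (n i : ℝ)) ^ (N : ℕ) := by
    calc (∏ i : Fin N, (1 + (n i : ℝ))) ≤ ∏ _i : Fin N, (1 + ∑ j, (n j : ℝ)) := by
          refine Finset.prod_le_prod (fun i _ => by positivity) (fun i _ => ?_)
          have : (n i : ℝ) ≤ ∑ j, (n j : ℝ) :=
            Finset.single_le_sum (f := fun j => (n j : ℝ)) (fun j _ => Nat.cast_nonneg _) (Finset.mem_univ i)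
          linarith
      _ = (1 + ∑ i, (n i : ℝ)) ^ (N : ℕ) := by
          simp [Finset.prod_const]
  have key : (1 + ∑ i, (n i : ℝ)) ^ (-t) ≤ (∏ i : Fin N, (1 + (n i : ℝ))) ^ (-(t / N)) := by
    have h2 : ((1 + ∑ i, (n i : ℝ)) ^ (N : ℕ)) ^ (-(t / N)) ≤
        (∏ i : Fin N, (1 + (n i : ℝ))) ^ (-(t / N)) :=
      Real.rpow_le_rpow_of_nonpos hPpos hPle (neg_nonpos.mpr (div_pos ht0 hN').le)
    refine le_trans (le_of_eq ?_) h2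
    rw [← Real.rpow_natCast (1 + ∑ i, (n i : ℝ)) N, ← Real.rpow_mul hS1.le]
    congr 1
    field_simp
  refine key.trans (le_of_eq ?_)
  rw [← Real.finset_prod_rpow _ _ (fun i _ => by positivity) _]

private lemma summable_barnes (N : ℕ) (w : Fin N → ℝ) (hw : ∀ i, 0 < w i) (x : ℂ)
    (hx : 0 < x.re) {s : ℂ} (hs : (N : ℝ) < s.re) :
    Summable (fun n : Fin N → ℕ => (x + ∑ i, (n i : ℂ) * (w i : ℂ)) ^ (-s)) := by
  rcases Nat.eq_zero_or_pos N with rfl | hN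
  · exact .of_finite
  have : Nonempty (Fin N) := ⟨⟨0, hN⟩⟩
  have hsre : (0 : ℝ) < s.re := lt_of_le_of_lt (by exact_mod_cast Nat.zero_le N) hs
  set c : ℝ := min x.re (Finset.univ.inf' Finset.univ_nonempty w) with hc_def
  have hc : 0 < c := lt_min hx (by
    rw [Finset.lt_inf'_iff]
    exact fun i _ => hw i)
  have hcw : ∀ i, c ≤ w i := fun i =>
    le_trans (min_le_right _ _) (Finset.inf'_le _ (Finset.mem_univ i))
  set K : ℝ := c ^ (-s.re) * Real.exp (Real.pi * |s.im|) with hK_def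
  refine Summable.of_norm_bounded (g := fun n => K * (1 + ∑ i, (n i : ℝ)) ^ (-s.re))
    ((summable_one_add_sum_rpow N hs).mul_left K) (fun n => ?_)
  set S : ℝ := ∑ i, (n i : ℝ) with hS_def
  have hSnn : 0 ≤ S := Finset.sum_nonneg fun i _ => by positivity
  set z : ℂ := x + ∑ i, (n i : ℂ) * (w i : ℂ) with hz_def
  have hzre : z.re = x.re + ∑ i, (n i : ℝ) * w i := by
    have : (∑ i, (n i : ℂ) * (w i : ℂ)) = ((∑ i, (n i : ℝ) * w i : ℝ) : ℂ) := by
      push_cast; ring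
    rw [hz_def, this, Complex.add_re, Complex.ofReal_re]
  have hge : c * (1 + S) ≤ z.re := by
    rw [hzre, mul_add, mul_one]
    have h1 : c * S ≤ ∑ i, (n i : ℝ) * w i := by
      rw [hS_def, Finset.mul_sum]
      refine Finset.sum_le_sum fun i _ => ?_
      rw [mul_comm c]
      exact mul_le_mul_of_nonneg_left (hcw i) (by positivity)
    have h2 : c ≤ x.re := min_le_left _ _
    linarith
  have hcS : (0 : ℝ) < c * (1 + S) := by positivity
  have hzre_pos : 0 < z.re := lt_of_lt_of_le hcS hge
  have hz0 : z ≠ 0 := fun h => by simp [h] at hzre_pos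
  have habs : ‖z ^ (-s)‖ =
      ‖z‖ ^ (-s).re / Real.exp (Complex.arg z * (-s).im) :=
    Complex.norm_cpow_of_ne_zero hz0 _
  rw [habs]
  have h1 : ‖z‖ ^ (-s).re ≤ (c * (1 + S)) ^ (-s.re) := by
    have : (-s).re = -s.re := by simp
    rw [this]
    exact Real.rpow_le_rpow_of_nonpos hcS (hge.trans (Complex.re_le_norm z))
      (by linarith)
  have h2 : Real.exp (-(Real.pi * |s.im|)) ≤ Real.exp (Complex.arg z * (-s).im) := by
    refine Real.exp_le_exp.mpr ?_
    have habs_arg : |Complex.arg z * (-s).im| ≤ Real.pi * |s.im| := by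
      rw [abs_mul]
      have h3 : |(-s).im| = |s.im| := by simp
      rw [h3]
      exact mul_le_mul_of_nonneg_right (Complex.abs_arg_le_pi z) (abs_nonneg _)
    linarith [neg_abs_le (Complex.arg z * (-s).im)]
  have h4 : (0 : ℝ) < Real.exp (Complex.arg z * (-s).im) := Real.exp_pos _
  have h5 : ‖z‖ ^ (-s).re / Real.exp (Complex.arg z * (-s).im) ≤
      (c * (1 + S)) ^ (-s.re) / Real.exp (-(Real.pi * |s.im|)) := by
    refine div_le_div₀ ?_ h1 (Real.exp_pos _) h2
    positivity
  refine h5.trans (le_of_eq ?_)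
  rw [Real.exp_neg, div_eq_mul_inv, inv_inv, Real.mul_rpow hc.le (by positivity), hK_def]
  ring

private def modDivEquiv {N : ℕ} (ℓ : Fin N → ℕ) (hℓ : ∀ i, 0 < ℓ i) :
    ((∀ i, Fin (ℓ i)) × (Fin N → ℕ)) ≃ (Fin N → ℕ) where
  toFun p := fun i => (p.1 i : ℕ) + ℓ i * p.2 i
  invFun n := (fun i => ⟨n i % ℓ i, Nat.mod_lt _ (hℓ i)⟩, fun i => n i / ℓ i)
  left_inv p := by
    refine Prod.ext (funext fun i => ?_) (funext fun i => ?_)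
    · ext
      simp [Nat.add_mul_mod_self_left, Nat.mod_eq_of_lt (p.1 i).isLt]
    · simp [Nat.add_mul_div_left _ _ (hℓ i), Nat.div_eq_of_lt (p.1 i).isLt]
  right_inv n := by
    funext i
    simp [Nat.mod_add_div]

/-- Proposition 2.2: with `w = lcm(r)/gcd(q)`, the `ℓ i = w / w i` are positive integers and
the Barnes zeta function is `w^{-s}` times a finite sum of multiple Hurwitz zeta functions. -/
theorem barnes_zeta_eq_sum_multiple_hurwitz
    (N : ℕ) (hN : 0 < N) (r q : Fin N → ℕ) (hr : ∀ i, 0 < r i) (hq : ∀ i, 0 < q i)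
    (hco : ∀ i, Nat.Coprime (r i) (q i))
    (x : ℂ) (hx : 0 < x.re) (s : ℂ) (hs : (N : ℝ) < s.re) :
    (∀ i, 0 < (Finset.univ.lcm r * q i) / (Finset.univ.gcd q * r i) ∧
        (((Finset.univ.lcm r * q i) / (Finset.univ.gcd q * r i) : ℕ) : ℚ) =
          (((Finset.univ.lcm r : ℕ) : ℚ) / ((Finset.univ.gcd q : ℕ) : ℚ)) / ((r i : ℚ) / (q i : ℚ))) ∧
    (∑' n : Fin N → ℕ, (x + ∑ i, (n i : ℂ) * ((r i : ℂ) / (q i : ℂ))) ^ (-s)) =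
      (((Finset.univ.lcm r : ℕ) : ℂ) / ((Finset.univ.gcd q : ℕ) : ℂ)) ^ (-s) *
        ∑ k ∈ Fintype.piFinset
            (fun i => Finset.range ((Finset.univ.lcm r * q i) / (Finset.univ.gcd q * r i))),
          ∑' n : Fin N → ℕ,
            ((((Finset.univ.lcm r : ℕ) : ℂ) / ((Finset.univ.gcd q : ℕ) : ℂ))⁻¹ *
                (x + ∑ i, (k i : ℂ) * ((r i : ℂ) / (q i : ℂ))) + ∑ i, (n i : ℂ)) ^ (-s) := by
  classical
  obtain ⟨i0⟩ : Nonempty (Fin N) := ⟨⟨0, hN⟩⟩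
  have hLne : Finset.univ.lcm r ≠ 0 := by
    intro h
    rcases Finset.lcm_eq_zero_iff.mp h with ⟨i, _, hi⟩
    exact (hr i).ne' hi
  have hGne : Finset.univ.gcd q ≠ 0 := by
    intro h
    exact (hq i0).ne' (Finset.gcd_eq_zero_iff.mp h i0 (Finset.mem_univ i0))
  set L := Finset.univ.lcm r with hLdef
  set G := Finset.univ.gcd q with hGdef
  have hLpos : 0 < L := Nat.pos_of_ne_zero hLne
  have hGpos : 0 < G := Nat.pos_of_ne_zero hGne
  have hdvd : ∀ i, (G * r i) ∣ (L * q i) := fun i => by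
    rw [mul_comm L (q i)]
    exact mul_dvd_mul (Finset.gcd_dvd (Finset.mem_univ i)) (Finset.dvd_lcm (Finset.mem_univ i))
  have hℓpos : ∀ i, 0 < L * q i / (G * r i) := fun i =>
    Nat.div_pos (Nat.le_of_dvd (Nat.mul_pos hLpos (hq i)) (hdvd i)) (Nat.mul_pos hGpos (hr i))
  have hcastQ : ∀ i, ((L * q i / (G * r i) : ℕ) : ℚ) =
      ((L : ℚ) / (G : ℚ)) / ((r i : ℚ) / (q i : ℚ)) := by
    intro i
    have h1 : (G : ℚ) ≠ 0 := Nat.cast_ne_zero.mpr hGne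
    have h2 : (r i : ℚ) ≠ 0 := Nat.cast_ne_zero.mpr (hr i).ne'
    have h3 : (q i : ℚ) ≠ 0 := Nat.cast_ne_zero.mpr (hq i).ne'
    rw [Nat.cast_div (hdvd i) (by
      push_cast
      exact mul_ne_zero h1 h2)]
    push_cast
    field_simp
  refine ⟨fun i => ⟨hℓpos i, hcastQ i⟩, ?_⟩
  -- notation
  set W : ℂ := (L : ℂ) / (G : ℂ) with hWdef
  have hWrpos : (0 : ℝ) < (L : ℝ) / (G : ℝ) := by
    have h1 : (0 : ℝ) < (L : ℝ) := by exact_mod_cast hLpos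
    have h2 : (0 : ℝ) < (G : ℝ) := by exact_mod_cast hGpos
    positivity
  have hWC : W = (((L : ℝ) / (G : ℝ) : ℝ) : ℂ) := by
    rw [hWdef]; push_cast; ring
  have hWne : W ≠ 0 := by
    rw [hWC]
    exact Complex.ofReal_ne_zero.mpr hWrpos.ne'
  have hkeyC : ∀ i, ((L * q i / (G * r i) : ℕ) : ℂ) * ((r i : ℂ) / (q i : ℂ)) = W := by
    intro i
    have h1 : (G : ℂ) ≠ 0 := Nat.cast_ne_zero.mpr hGne
    have h2 : (r i : ℂ) ≠ 0 := Nat.cast_ne_zero.mpr (hr i).ne'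
    have h3 : (q i : ℂ) ≠ 0 := Nat.cast_ne_zero.mpr (hq i).ne'
    rw [Nat.cast_div (hdvd i) (by
      push_cast
      exact mul_ne_zero h1 h2), hWdef]
    push_cast
    field_simp
  set wR : Fin N → ℝ := fun i => (r i : ℝ) / (q i : ℝ) with hwRdef
  have hwRpos : ∀ i, 0 < wR i := fun i => by
    have h1 : (0 : ℝ) < (r i : ℝ) := by exact_mod_cast hr i
    have h2 : (0 : ℝ) < (q i : ℝ) := by exact_mod_cast hq i
    exact div_pos h1 h2
  have hwC : ∀ i, ((wR i : ℝ) : ℂ) = (r i : ℂ) / (q i : ℂ) := fun i => by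
    rw [hwRdef]; push_cast; ring
  -- summability
  have hsum : Summable (fun n : Fin N → ℕ =>
      (x + ∑ i, (n i : ℂ) * ((r i : ℂ) / (q i : ℂ))) ^ (-s)) := by
    refine (summable_barnes N wR hwRpos x hx hs).congr fun n => ?_
    congr 1
    refine congrArg (x + ·) (Finset.sum_congr rfl fun i _ => ?_)
    rw [hwC i]
  set f : (Fin N → ℕ) → ℂ :=
    fun n => (x + ∑ i, (n i : ℂ) * ((r i : ℂ) / (q i : ℂ))) ^ (-s) with hfdef
  set E := modDivEquiv (fun i => L * q i / (G * r i)) hℓpos with hEdef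
  have hsumE : Summable (f ∘ E) := E.summable_iff.mpr hsum
  -- positivity of real parts of shifted arguments
  have hyre : ∀ k : Fin N → ℕ, 0 < (x + ∑ i, (k i : ℂ) * ((r i : ℂ) / (q i : ℂ))).re := by
    intro k
    have heq : x + ∑ i, (k i : ℂ) * ((r i : ℂ) / (q i : ℂ)) =
        x + ((∑ i, (k i : ℝ) * wR i : ℝ) : ℂ) := by
      refine congrArg (x + ·) ?_
      rw [Complex.ofReal_sum]
      refine Finset.sum_congr rfl fun i _ => ?_
      rw [Complex.ofReal_mul, hwC i]
      norm_num
    rw [heq, Complex.add_re, Complex.ofReal_re]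
    have h0 : 0 ≤ ∑ i, (k i : ℝ) * wR i :=
      Finset.sum_nonneg fun i _ => mul_nonneg (Nat.cast_nonneg _) (hwRpos i).le
    linarith
  -- the term identity
  have hterm : ∀ k m : Fin N → ℕ,
      f (fun i => k i + (L * q i / (G * r i)) * m i) =
        W ^ (-s) * ((W⁻¹ * (x + ∑ i, (k i : ℂ) * ((r i : ℂ) / (q i : ℂ))) +
          ∑ i, (m i : ℂ)) ^ (-s)) := by
    intro k m
    set y : ℂ := x + ∑ i, (k i : ℂ) * ((r i : ℂ) / (q i : ℂ)) with hydef
    set Z : ℂ := W⁻¹ * y + ∑ i, (m i : ℂ) with hZdef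
    have hZre : 0 < Z.re := by
      have hWinv : W⁻¹ = ((((L : ℝ) / (G : ℝ))⁻¹ : ℝ) : ℂ) := by
        rw [hWC, Complex.ofReal_inv]
      have hMsum : (∑ i, (m i : ℂ)) = ((∑ i, (m i : ℝ) : ℝ) : ℂ) := by push_cast; ring
      rw [hZdef, hWinv, hMsum, Complex.add_re, Complex.re_ofReal_mul, Complex.ofReal_re]
      have h1 : 0 < ((L : ℝ) / (G : ℝ))⁻¹ * y.re := by
        have := hyre k
        rw [← hydef] at this
        positivity
      have h2 : 0 ≤ ∑ i, (m i : ℝ) := Finset.sum_nonneg fun i _ => Nat.cast_nonneg _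
      linarith
    have hZ0 : Z ≠ 0 := by
      intro h
      rw [h] at hZre
      simp at hZre
    have harg : x + ∑ i, ((k i + (L * q i / (G * r i)) * m i : ℕ) : ℂ) *
        ((r i : ℂ) / (q i : ℂ)) = W * Z := by
      rw [hZdef, mul_add, ← mul_assoc, mul_inv_cancel₀ hWne, one_mul, hydef, Finset.mul_sum]
      rw [add_assoc, ← Finset.sum_add_distrib]
      refine congrArg (x + ·) (Finset.sum_congr rfl fun i _ => ?_)
      push_cast
      rw [add_mul, ← hkeyC i]
      ring
    rw [hfdef]
    simp only []
    rw [harg, hWC, ofReal_mul_cpow' hWrpos hZ0, ← hWC]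
  -- rearrangement
  calc (∑' n : Fin N → ℕ, f n)
      = ∑' p : (∀ i, Fin (L * q i / (G * r i))) × (Fin N → ℕ), f (E p) := (E.tsum_eq f).symm
    _ = ∑' (k : ∀ i, Fin (L * q i / (G * r i))), ∑' (m : Fin N → ℕ), f (E (k, m)) :=
        Summable.tsum_prod' hsumE fun k => hsumE.prod_factor k
    _ = ∑ k : ∀ i, Fin (L * q i / (G * r i)), ∑' (m : Fin N → ℕ), f (E (k, m)) := by
        rw [tsum_fintype]
    _ = ∑ k : ∀ i, Fin (L * q i / (G * r i)), W ^ (-s) *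
          ∑' (m : Fin N → ℕ),
            ((W⁻¹ * (x + ∑ i, ((k i : ℕ) : ℂ) * ((r i : ℂ) / (q i : ℂ))) +
              ∑ i, (m i : ℂ)) ^ (-s)) := by
        refine Finset.sum_congr rfl fun k _ => ?_
        rw [← tsum_mul_left]
        refine tsum_congr fun m => ?_
        exact hterm (fun i => (k i : ℕ)) m
    _ = W ^ (-s) * ∑ k : ∀ i, Fin (L * q i / (G * r i)),
          ∑' (m : Fin N → ℕ),
            ((W⁻¹ * (x + ∑ i, ((k i : ℕ) : ℂ) * ((r i : ℂ) / (q i : ℂ))) +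
              ∑ i, (m i : ℂ)) ^ (-s)) := by
        rw [Finset.mul_sum]
    _ = W ^ (-s) * ∑ k ∈ Fintype.piFinset (fun i => Finset.range (L * q i / (G * r i))),
          ∑' (n : Fin N → ℕ),
            ((W⁻¹ * (x + ∑ i, (k i : ℂ) * ((r i : ℂ) / (q i : ℂ))) +
              ∑ i, (n i : ℂ)) ^ (-s)) := by
        congr 1
        refine Finset.sum_bij' (fun k _ => fun j => (k j : ℕ))
          (fun k hk => fun j => ⟨k j, ?_⟩) ?_ ?_ ?_ ?_ ?_
        · rw [← Finset.mem_range]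
          exact Fintype.mem_piFinset.mp hk j
        · intro k _
          rw [Fintype.mem_piFinset]
          intro j
          rw [Finset.mem_range]
          exact (k j).isLt
        · intro k hk
          exact Finset.mem_univ _
        · intro k hk
          rfl
        · intro k hk
          rfl
        · intro k _
          rfl
end

section
/- Let w_1,…,w_N be positive rationals in lowest terms w_i = r_i/q_i, and set w := lcm(r_1,…,r_N)/gcd(q_1,…,q_N). For every prime p, ord_p(lcm(q w_1,…,q w_N) · gcd(q_1,…,q_N)) = ord_p(q · lcm(r_1,…,r_N)), where q := lcm(q_1,…,q_N); equivalently, q / lcm(q w_1,…,q w_N) = gcd(q_1,…,q_N)/lcm(r_1,…,r_N). -/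
open Finset

lemma padicValNat_lcm' {p a b : ℕ} (hp : p.Prime) (ha : a ≠ 0) (hb : b ≠ 0) :
    padicValNat p (Nat.lcm a b) = max (padicValNat p a) (padicValNat p b) := by
  have h := Nat.factorization_lcm ha hb
  have := congrArg (fun f => f p) h
  simpa [Nat.factorization_def _ hp, Finsupp.sup_apply] using this

lemma padicValNat_gcd' {p a b : ℕ} (hp : p.Prime) (ha : a ≠ 0) (hb : b ≠ 0) :
    padicValNat p (Nat.gcd a b) = min (padicValNat p a) (padicValNat p b) := by
  have h := Nat.factorization_gcd ha hb
  have := congrArg (fun f => f p) h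
  simpa [Nat.factorization_def _ hp, Finsupp.inf_apply] using this

lemma padicValNat_finset_lcm {ι : Type*} [DecidableEq ι] {p : ℕ} (hp : p.Prime) (s : Finset ι)
    (f : ι → ℕ) (hf : ∀ i ∈ s, f i ≠ 0) :
    padicValNat p (s.lcm f) = s.sup fun i => padicValNat p (f i) := by
  induction s using Finset.induction_on with
  | empty => simp [Finset.lcm_empty]
  | insert a s ha ih =>
    have hfa : f a ≠ 0 := hf a (Finset.mem_insert_self a s)
    have hsl : s.lcm f ≠ 0 := by
      intro h0
      obtain ⟨i, hi, h⟩ := Finset.lcm_eq_zero_iff.mp h0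
      exact hf i (Finset.mem_insert_of_mem hi) h
    rw [Finset.lcm_insert, Finset.sup_insert,
      show GCDMonoid.lcm (f a) (s.lcm f) = Nat.lcm (f a) (s.lcm f) from rfl,
      padicValNat_lcm' hp hfa hsl, ih (fun i hi => hf i (Finset.mem_insert_of_mem hi))]

lemma padicValNat_finset_gcd {ι : Type*} [DecidableEq ι] {p : ℕ} (hp : p.Prime) (s : Finset ι)
    (hs : s.Nonempty) (f : ι → ℕ) (hf : ∀ i ∈ s, f i ≠ 0) :
    padicValNat p (s.gcd f) = s.inf' hs fun i => padicValNat p (f i) := by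
  induction hs using Finset.Nonempty.cons_induction with
  | singleton a => simp
  | cons a s ha hs ih =>
    have hfa : f a ≠ 0 := hf a (Finset.mem_cons_self a s)
    have hsg : s.gcd f ≠ 0 := by
      intro h0
      obtain ⟨i, hi⟩ := hs
      exact hf i (Finset.mem_cons_of_mem hi) (Finset.gcd_eq_zero_iff.mp h0 i hi)
    rw [show (Finset.cons a s ha).gcd f = GCDMonoid.gcd (f a) (s.gcd f) from by
        rw [Finset.cons_eq_insert, Finset.gcd_insert],
      Finset.inf'_cons,
      show GCDMonoid.gcd (f a) (s.gcd f) = Nat.gcd (f a) (s.gcd f) from rfl,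
      padicValNat_gcd' hp hfa hsg, ih (fun i hi => hf i (Finset.mem_cons_of_mem hi))]

/-- For `w i = r i / q i` in lowest terms and `Q = lcm(q)`, one has, prime by prime,
`ord_p(lcm(Q·w) · gcd(q)) = ord_p(Q · lcm(r))`; equivalently
`Q / lcm(Q·w) = gcd(q) / lcm(r)`. -/
theorem ord_lcm_gcd_eq (N : ℕ) (hN : 0 < N) (r q : Fin N → ℕ)
    (hr : ∀ i, 0 < r i) (hq : ∀ i, 0 < q i) (hco : ∀ i, Nat.Coprime (r i) (q i)) :
    (∀ p : ℕ, p.Prime →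
      padicValNat p ((Finset.univ.lcm fun i => (Finset.univ.lcm q * r i) / q i) *
          Finset.univ.gcd q)
        = padicValNat p (Finset.univ.lcm q * Finset.univ.lcm r)) ∧
    (((Finset.univ.lcm q : ℕ) : ℚ) /
        ((Finset.univ.lcm fun i => (Finset.univ.lcm q * r i) / q i : ℕ) : ℚ))
      = ((Finset.univ.gcd q : ℕ) : ℚ) / ((Finset.univ.lcm r : ℕ) : ℚ) := by
  have hne : (Finset.univ : Finset (Fin N)).Nonempty :=
    Finset.univ_nonempty_iff.mpr (Fin.pos_iff_nonempty.mp hN)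
  have hQ0 : Finset.univ.lcm q ≠ 0 := by
    intro h0
    obtain ⟨i, -, h⟩ := Finset.lcm_eq_zero_iff.mp h0
    exact (hq i).ne' h
  have hL0 : Finset.univ.lcm r ≠ 0 := by
    intro h0
    obtain ⟨i, -, h⟩ := Finset.lcm_eq_zero_iff.mp h0
    exact (hr i).ne' h
  have hG0 : Finset.univ.gcd q ≠ 0 := by
    intro h0
    obtain ⟨i, hi⟩ := hne
    exact (hq i).ne' (Finset.gcd_eq_zero_iff.mp h0 i hi)
  have hdvd : ∀ i, q i ∣ Finset.univ.lcm q * r i := fun i =>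
    dvd_mul_of_dvd_left (Finset.dvd_lcm (Finset.mem_univ i)) _
  have hfq : ∀ i, (Finset.univ.lcm q * r i) / q i * q i = Finset.univ.lcm q * r i :=
    fun i => Nat.div_mul_cancel (hdvd i)
  have hf0 : ∀ i, (Finset.univ.lcm q * r i) / q i ≠ 0 := by
    intro i h0
    have := hfq i
    rw [h0, zero_mul] at this
    exact (Nat.mul_pos (Nat.pos_of_ne_zero hQ0) (hr i)).ne this
  have hM0 : (Finset.univ.lcm fun i => (Finset.univ.lcm q * r i) / q i) ≠ 0 := by
    intro h0
    obtain ⟨i, -, h⟩ := Finset.lcm_eq_zero_iff.mp h0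
    exact hf0 i h
  have key : ∀ p : ℕ, p.Prime →
      padicValNat p ((Finset.univ.lcm fun i => (Finset.univ.lcm q * r i) / q i) *
          Finset.univ.gcd q)
        = padicValNat p (Finset.univ.lcm q * Finset.univ.lcm r) := by
    intro p hp
    have : Fact p.Prime := ⟨hp⟩
    rw [padicValNat.mul hM0 hG0, padicValNat.mul hQ0 hL0,
      padicValNat_finset_lcm hp _ _ (fun i _ => hf0 i),
      padicValNat_finset_lcm hp _ r (fun i _ => (hr i).ne'),
      padicValNat_finset_lcm hp _ q (fun i _ => (hq i).ne'),
      padicValNat_finset_gcd hp _ hne q (fun i _ => (hq i).ne')]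
    set a : Fin N → ℕ := fun i => padicValNat p (r i) with hadef
    set b : Fin N → ℕ := fun i => padicValNat p (q i) with hbdef
    set c : Fin N → ℕ := fun i => padicValNat p ((Finset.univ.lcm q * r i) / q i) with hcdef
    set B := Finset.univ.sup b with hBdef
    set A := Finset.univ.sup a with hAdef
    set m := Finset.univ.inf' hne b with hmdef
    have hvQ : padicValNat p (Finset.univ.lcm q) = B := by
      rw [hBdef, hbdef]
      exact padicValNat_finset_lcm hp _ q (fun i _ => (hq i).ne')
    have hc : ∀ i, c i + b i = B + a i := by
      intro i
      have h1 : padicValNat p ((Finset.univ.lcm q * r i) / q i * q i)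
          = padicValNat p (Finset.univ.lcm q * r i) := by rw [hfq i]
      rw [padicValNat.mul (hf0 i) (hq i).ne', padicValNat.mul hQ0 (hr i).ne', hvQ] at h1
      exact h1
    have hmin : ∀ i, a i = 0 ∨ b i = 0 := by
      intro i
      by_contra h
      push_neg at h
      have hpa : p ∣ r i := dvd_of_one_le_padicValNat (Nat.pos_of_ne_zero h.1)
      have hpb : p ∣ q i := dvd_of_one_le_padicValNat (Nat.pos_of_ne_zero h.2)
      have : p ∣ Nat.gcd (r i) (q i) := Nat.dvd_gcd hpa hpb
      rw [hco i] at this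
      exact hp.ne_one (Nat.eq_one_of_dvd_one this)
    have hbB : ∀ i, b i ≤ B := fun i => Finset.le_sup (Finset.mem_univ i)
    have haA : ∀ i, a i ≤ A := fun i => Finset.le_sup (Finset.mem_univ i)
    have hmb : ∀ i, m ≤ b i := fun i => Finset.inf'_le _ (Finset.mem_univ i)
    have hsupc : Finset.univ.sup c = B + A - m := by
      apply le_antisymm
      · apply Finset.sup_le
        intro i _
        have := hc i
        have := hmb i
        have := haA i
        omega
      · rcases Nat.eq_zero_or_pos A with hA | hA
        · obtain ⟨j, hj, hjm⟩ := Finset.exists_mem_eq_inf' hne b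
          have := hc j
          have := haA j
          refine le_trans ?_ (Finset.le_sup (Finset.mem_univ j))
          omega
        · obtain ⟨k, hk, hka⟩ := Finset.exists_mem_eq_sup' hne a
          rw [Finset.sup'_eq_sup] at hka
          have hbk : b k = 0 := by
            rcases hmin k with h | h
            · omega
            · exact h
          have := hc k
          refine le_trans ?_ (Finset.le_sup (Finset.mem_univ k))
          omega
    obtain ⟨j, hj, hjm⟩ := Finset.exists_mem_eq_inf' hne b
    have := hbB j
    rw [hsupc]
    omega
  refine ⟨key, ?_⟩
  have hnat : (Finset.univ.lcm fun i => (Finset.univ.lcm q * r i) / q i) * Finset.univ.gcd q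
      = Finset.univ.lcm q * Finset.univ.lcm r :=
    (Nat.eq_iff_prime_padicValNat_eq _ _ (mul_ne_zero hM0 hG0) (mul_ne_zero hQ0 hL0)).mpr key
  have hMM : ((Finset.univ.lcm fun i => (Finset.univ.lcm q * r i) / q i : ℕ) : ℚ) ≠ 0 :=
    Nat.cast_ne_zero.mpr hM0
  have hLL : ((Finset.univ.lcm r : ℕ) : ℚ) ≠ 0 := Nat.cast_ne_zero.mpr hL0
  rw [div_eq_div_iff hMM hLL]
  have := congrArg (fun n : ℕ => (n : ℚ)) hnat
  push_cast at this ⊢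
  linarith [this]
end

section
/- Let f and g be holomorphic functions on an open set D ⊆ ℂ with f'(s) = f(s)g(s) on D. Then for every n ≥ 0, f^{(n)}(s) = f(s)·𝔹_n(g(s), g'(s), …, g^{(n-1)}(s)), where 𝔹_n is the n-th complete Bell polynomial. -/
open Finset PowerSeries

private lemma coeff_pow_congr {R : Type*} [CommSemiring R] {F G : R⟦X⟧} {n : ℕ}
    (h : ∀ i ≤ n, coeff i F = coeff i G) (m : ℕ) :
    ∀ i ≤ n, coeff i (F ^ m) = coeff i (G ^ m) := by
  induction m with
  | zero => intro i hi; rfl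
  | succ m IH =>
    intro i hi
    rw [pow_succ, pow_succ, coeff_mul, coeff_mul]
    refine Finset.sum_congr rfl fun p hp => ?_
    rw [Finset.HasAntidiagonal.mem_antidiagonal] at hp
    rw [IH p.1 (by omega), h p.2 (by omega)]

private lemma coeff_pow_zero' {R : Type*} [CommSemiring R] {F : R⟦X⟧}
    (h : constantCoeff F = 0) : ∀ m l, l < m → coeff l (F ^ m) = 0 := by
  intro m
  induction m with
  | zero => intro l hl; omega
  | succ m IH =>
    intro l hl
    rw [pow_succ, coeff_mul]
    refine Finset.sum_eq_zero fun p hp => ?_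
    rw [Finset.HasAntidiagonal.mem_antidiagonal] at hp
    rcases Nat.eq_zero_or_pos p.2 with h2 | h2
    · have : coeff p.2 F = 0 := by rw [h2, coeff_zero_eq_constantCoeff, h]
      rw [this, mul_zero]
    · rw [IH p.1 (by omega), zero_mul]

private lemma bell_recurrence (B : ℕ → MvPolynomial ℕ ℚ)
    (hB : ∀ n : ℕ, (PowerSeries.coeff (R := MvPolynomial ℕ ℚ) n)
        (∑ m ∈ Finset.range (n + 1), (m.factorial : ℚ)⁻¹ •
          (∑ j ∈ Finset.Icc 1 n, PowerSeries.monomial (R := MvPolynomial ℕ ℚ) j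
              ((j.factorial : ℚ)⁻¹ • MvPolynomial.X j)) ^ m)
        = (n.factorial : ℚ)⁻¹ • B n) (n : ℕ) :
    B (n + 1) = ∑ k ∈ Finset.range (n + 1),
      (n.choose k : ℚ) • (MvPolynomial.X (k + 1) * B (n - k)) := by
  set G : (MvPolynomial ℕ ℚ)⟦X⟧ := PowerSeries.mk fun j => if j = 0 then 0 else
    (j.factorial : ℚ)⁻¹ • MvPolynomial.X j with hGdef
  have hGc : constantCoeff (R := MvPolynomial ℕ ℚ) G = 0 := by
    rw [← coeff_zero_eq_constantCoeff, hGdef, coeff_mk]; simp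
  have hGt : ∀ N : ℕ, ∀ i ≤ N,
      (coeff (R := MvPolynomial ℕ ℚ) i) (∑ j ∈ Finset.Icc 1 N, PowerSeries.monomial (R := MvPolynomial ℕ ℚ) j
        ((j.factorial : ℚ)⁻¹ • MvPolynomial.X j)) = coeff (R := MvPolynomial ℕ ℚ) i G := by
    intro N i hi
    rw [map_sum, hGdef, coeff_mk]
    simp only [coeff_monomial]
    rw [Finset.sum_ite_eq (Finset.Icc 1 N) i]
    by_cases h0 : i = 0
    · simp [h0]
    · rw [if_pos (Finset.mem_Icc.2 ⟨by omega, hi⟩), if_neg h0]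
  have hS : ∀ N : ℕ, ∀ i ≤ N,
      (coeff (R := MvPolynomial ℕ ℚ) i) (∑ m ∈ Finset.range (N + 1), (m.factorial : ℚ)⁻¹ • G ^ m)
        = (i.factorial : ℚ)⁻¹ • B i := by
    intro N i hi
    have h1 : (coeff (R := MvPolynomial ℕ ℚ) i) (∑ m ∈ Finset.range (i + 1), (m.factorial : ℚ)⁻¹ • G ^ m)
        = (i.factorial : ℚ)⁻¹ • B i := by
      rw [← hB i, map_sum, map_sum]
      refine Finset.sum_congr rfl fun m hm => ?_
      rw [coeff_smul, coeff_smul, coeff_pow_congr (hGt i) m i le_rfl]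
    rw [← h1, map_sum, map_sum]
    refine (Finset.sum_subset (Finset.range_subset_range.2 (by omega)) ?_).symm
    intro m hm hmn
    simp only [Finset.mem_range] at hm hmn
    rw [coeff_smul, coeff_pow_zero' hGc m i (by omega), smul_zero]
  set dG := PowerSeries.derivative (MvPolynomial ℕ ℚ) G with hdGdef
  have hterm : ∀ m : ℕ, ((n + 1 : ℕ) : ℚ) • (coeff (R := MvPolynomial ℕ ℚ) (n+1)) (G ^ m)
      = m • (coeff (R := MvPolynomial ℕ ℚ) n) (G ^ (m - 1) * dG) := by
    intro m
    have h := PowerSeries.coeff_derivative (G ^ m) n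
    rw [Derivation.leibniz_pow, smul_eq_mul, map_nsmul] at h
    rw [h, Nat.cast_smul_eq_nsmul ℚ, nsmul_eq_mul]
    push_cast
    ring
  have key : (n.factorial : ℚ)⁻¹ • B (n + 1)
      = ∑ l ∈ Finset.range (n + 1), (l.factorial : ℚ)⁻¹ •
          (coeff (R := MvPolynomial ℕ ℚ) n) (G ^ l * dG) := by
    have e0 := hS (n+1) (n+1) le_rfl
    have e1 : (n.factorial : ℚ)⁻¹ • B (n+1)
        = ((n+1 : ℕ) : ℚ) • (((n+1).factorial : ℚ)⁻¹ • B (n+1)) := by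
      rw [smul_smul]
      congr 1
      rw [Nat.factorial_succ]
      have h2 : ((n.factorial : ℕ) : ℚ) ≠ 0 := by
        exact_mod_cast Nat.factorial_ne_zero n
      push_cast
      field_simp
    rw [e1, ← e0, map_sum]
    simp only [coeff_smul]
    rw [Finset.smul_sum]
    have e2 : ∀ m : ℕ, ((n+1:ℕ):ℚ) • ((m.factorial : ℚ)⁻¹ •
          (coeff (R := MvPolynomial ℕ ℚ) (n+1)) (G ^ m))
        = (m.factorial : ℚ)⁻¹ • (m • (coeff (R := MvPolynomial ℕ ℚ) n) (G ^ (m-1) * dG)) := by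
      intro m
      rw [smul_comm, hterm m]
    simp only [e2]
    rw [Finset.sum_range_succ']
    have e3 : ∀ l : ℕ, ((l+1).factorial : ℚ)⁻¹ •
          ((l+1) • (coeff (R := MvPolynomial ℕ ℚ) n) (G ^ l * dG))
        = (l.factorial : ℚ)⁻¹ • (coeff (R := MvPolynomial ℕ ℚ) n) (G ^ l * dG) := by
      intro l
      rw [← Nat.cast_smul_eq_nsmul ℚ, smul_smul]
      congr 1
      rw [Nat.factorial_succ]
      have h2 : ((l.factorial : ℕ) : ℚ) ≠ 0 := by
        exact_mod_cast Nat.factorial_ne_zero l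
      push_cast
      field_simp
    simp only [Nat.add_sub_cancel, e3, Nat.factorial_zero, zero_smul, smul_zero, add_zero,
      Nat.cast_one, inv_one, one_smul]
  have key2 : (n.factorial : ℚ)⁻¹ • B (n + 1) = ∑ p ∈ Finset.HasAntidiagonal.antidiagonal n,
      ((p.1.factorial : ℚ)⁻¹ • B p.1) *
        ((((p.2+1).factorial : ℚ)⁻¹ • MvPolynomial.X (p.2+1)) * ((p.2 : MvPolynomial ℕ ℚ) + 1)) := by
    rw [key]
    simp only [coeff_mul]
    simp only [Finset.smul_sum]
    rw [Finset.sum_comm]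
    refine Finset.sum_congr rfl fun p hp => ?_
    rw [Finset.HasAntidiagonal.mem_antidiagonal] at hp
    have h1 : ∀ x : ℕ, (x.factorial : ℚ)⁻¹ •
          ((coeff (R := MvPolynomial ℕ ℚ) p.1) (G ^ x) * (coeff (R := MvPolynomial ℕ ℚ) p.2) dG)
        = ((x.factorial : ℚ)⁻¹ • (coeff (R := MvPolynomial ℕ ℚ) p.1) (G ^ x)) *
            (coeff (R := MvPolynomial ℕ ℚ) p.2) dG := fun x => (smul_mul_assoc _ _ _).symm
    simp only [h1]
    rw [← Finset.sum_mul]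
    have h2 : ∑ x ∈ Finset.range (n+1), (x.factorial : ℚ)⁻¹ •
          (coeff (R := MvPolynomial ℕ ℚ) p.1) (G ^ x) = (p.1.factorial : ℚ)⁻¹ • B p.1 := by
      have h3 := hS n p.1 (by omega)
      rw [map_sum] at h3
      simpa only [coeff_smul] using h3
    rw [h2]
    congr 1
    rw [hdGdef, PowerSeries.coeff_derivative]
    congr 1
    rw [hGdef, coeff_mk, if_neg (Nat.succ_ne_zero p.2)]
  have hfacn : ((n.factorial : ℕ) : ℚ) ≠ 0 := by exact_mod_cast Nat.factorial_ne_zero n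
  calc B (n + 1) = (n.factorial : ℚ) • ((n.factorial : ℚ)⁻¹ • B (n+1)) := by
        rw [smul_smul, mul_inv_cancel₀ hfacn, one_smul]
    _ = ∑ k ∈ Finset.range (n + 1), (n.factorial : ℚ) •
          (((k.factorial : ℚ)⁻¹ • B k) *
            ((((n-k+1).factorial : ℚ)⁻¹ • MvPolynomial.X (n-k+1)) *
              (((n-k : ℕ) : MvPolynomial ℕ ℚ) + 1))) := by
        rw [key2, Finset.Nat.sum_antidiagonal_eq_sum_range_succ_mk, Finset.smul_sum]
    _ = ∑ k ∈ Finset.range (n + 1), (n.choose (n-k) : ℚ) • (MvPolynomial.X (n-k+1) * B k) := by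
        refine Finset.sum_congr rfl fun k hk => ?_
        rw [Finset.mem_range] at hk
        have hk' : k ≤ n := by omega
        have hsc : (n.choose (n-k) : ℚ)
            = (n.factorial : ℚ) * ((k.factorial : ℚ)⁻¹ * (((n-k+1).factorial : ℚ)⁻¹ * ((n-k : ℕ) + 1))) := by
          rw [Nat.cast_choose ℚ (Nat.sub_le n k), Nat.sub_sub_self hk', Nat.factorial_succ]
          have h2 : ((k.factorial : ℕ) : ℚ) ≠ 0 := by exact_mod_cast Nat.factorial_ne_zero k
          generalize (n - k) = m
          have h3 : ((m.factorial : ℕ) : ℚ) ≠ 0 := by exact_mod_cast Nat.factorial_ne_zero m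
          field_simp
          push_cast
          ring
        rw [hsc]
        simp only [MvPolynomial.smul_eq_C_mul, map_mul, map_add, map_natCast, map_one, map_inv₀]
        ring
    _ = ∑ k ∈ Finset.range (n + 1), (n.choose k : ℚ) • (MvPolynomial.X (k + 1) * B (n - k)) := by
        conv_rhs => rw [← Finset.sum_range_reflect]
        refine Finset.sum_congr rfl fun j hj => ?_
        rw [Finset.mem_range] at hj
        simp only [show n + 1 - 1 - j = n - j from by omega,
          Nat.sub_sub_self (by omega : j ≤ n)]


private lemma iteratedDeriv_eventuallyEq {F G : ℂ → ℂ} {x : ℂ} (h : F =ᶠ[nhds x] G) (n : ℕ) :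
    iteratedDeriv n F =ᶠ[nhds x] iteratedDeriv n G := by
  induction n with
  | zero => simpa [iteratedDeriv_zero] using h
  | succ n IH => simpa only [iteratedDeriv_succ] using IH.deriv

private lemma pascal_sum (a b : ℕ → ℂ) (n : ℕ) :
    ∑ k ∈ Finset.range (n + 1 + 1), (((n+1).choose k : ℕ) : ℂ) * (a k * b (n + 1 - k)) =
      ∑ k ∈ Finset.range (n + 1), ((n.choose k : ℕ) : ℂ) * (a (k+1) * b (n - k)) +
      ∑ k ∈ Finset.range (n + 1), ((n.choose k : ℕ) : ℂ) * (a k * b (n + 1 - k)) := by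
  rw [Finset.sum_range_succ' (fun k => (((n+1).choose k : ℕ) : ℂ) * (a k * b (n + 1 - k))) (n+1)]
  have e1 : ∀ k ∈ Finset.range (n + 1),
      (((n+1).choose (k+1) : ℕ) : ℂ) * (a (k+1) * b (n + 1 - (k+1)))
        = ((n.choose k : ℕ) : ℂ) * (a (k+1) * b (n - k))
          + ((n.choose (k+1) : ℕ) : ℂ) * (a (k+1) * b (n - k)) := by
    intro k hk
    rw [Nat.choose_succ_succ, Nat.succ_sub_succ]
    push_cast
    ring
  rw [Finset.sum_congr rfl e1, Finset.sum_add_distrib]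
  have e2 : ∑ k ∈ Finset.range (n + 1), ((n.choose (k+1) : ℕ) : ℂ) * (a (k+1) * b (n - k))
        + (((n+1).choose 0 : ℕ) : ℂ) * (a 0 * b (n + 1 - 0))
      = ∑ k ∈ Finset.range (n + 1), ((n.choose k : ℕ) : ℂ) * (a k * b (n + 1 - k)) := by
    have e3 : ∀ k ∈ Finset.range (n + 1), ((n.choose (k+1) : ℕ) : ℂ) * (a (k+1) * b (n - k))
        = (fun k => ((n.choose k : ℕ) : ℂ) * (a k * b (n + 1 - k))) (k+1) := by
      intro k hk
      simp only [show n + 1 - (k+1) = n - k from by omega]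
    rw [Finset.sum_congr rfl e3]
    have e4 := (Finset.sum_range_succ' (fun k => ((n.choose k : ℕ) : ℂ) * (a k * b (n + 1 - k))) (n+1)).symm
    simp only at e4 ⊢
    rw [show (((n+1).choose 0 : ℕ) : ℂ) = ((n.choose 0 : ℕ) : ℂ) by simp] at *
    rw [e4, Finset.sum_range_succ]
    simp [Nat.choose_succ_self]
  rw [add_assoc, e2]

private lemma leibniz_aux {D : Set ℂ} (hD : IsOpen D) {f g : ℂ → ℂ}
    (hf : AnalyticOnNhd ℂ f D) (hg : AnalyticOnNhd ℂ g D) (n : ℕ) :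
    ∀ x ∈ D, iteratedDeriv n (fun y => f y * g y) x =
      ∑ k ∈ Finset.range (n + 1), ((n.choose k : ℕ) : ℂ) *
        (iteratedDeriv k f x * iteratedDeriv (n - k) g x) := by
  induction n with
  | zero => intro x hx; simp [iteratedDeriv_zero]
  | succ n IH =>
    intro x hx
    have hDf : ∀ (h : ℂ → ℂ), AnalyticOnNhd ℂ h D → ∀ k : ℕ,
        HasDerivAt (iteratedDeriv k h) (iteratedDeriv (k+1) h x) x := by
      intro h hh k
      have h1 : AnalyticAt ℂ (deriv^[k] h) x := hh.iterated_deriv k x hx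
      have h2 : DifferentiableAt ℂ (iteratedDeriv k h) x := by
        rw [iteratedDeriv_eq_iterate]; exact h1.differentiableAt
      have h3 := h2.hasDerivAt
      rwa [← iteratedDeriv_succ] at h3
    have heq : iteratedDeriv n (fun y => f y * g y) =ᶠ[nhds x]
        (fun y => ∑ k ∈ Finset.range (n + 1), ((n.choose k : ℕ) : ℂ) *
          (iteratedDeriv k f y * iteratedDeriv (n - k) g y)) :=
      Filter.eventually_of_mem (hD.mem_nhds hx) (fun y hy => IH y hy)
    rw [iteratedDeriv_succ, heq.deriv_eq]
    have hsum : HasDerivAt (fun y => ∑ k ∈ Finset.range (n + 1), ((n.choose k : ℕ) : ℂ) *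
          (iteratedDeriv k f y * iteratedDeriv (n - k) g y))
        (∑ k ∈ Finset.range (n + 1), ((n.choose k : ℕ) : ℂ) *
          (iteratedDeriv (k+1) f x * iteratedDeriv (n - k) g x
            + iteratedDeriv k f x * iteratedDeriv (n - k + 1) g x)) x := by
      refine HasDerivAt.fun_sum fun k hk => ?_
      exact ((hDf f hf k).mul (hDf g hg (n-k))).const_mul _
    rw [hsum.deriv]
    simp only [mul_add]
    rw [Finset.sum_add_distrib]
    rw [pascal_sum (fun k => iteratedDeriv k f x) (fun k => iteratedDeriv k g x) n]
    congr 1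
    refine Finset.sum_congr rfl fun k hk => ?_
    rw [Finset.mem_range] at hk
    rw [show n - k + 1 = n + 1 - k from by omega]


/-- If `f' = f·g` on an open set `D`, then `f⁽ⁿ⁾ = f · 𝔹_n(g, g', …, g⁽ⁿ⁻¹⁾)` on `D`,
where `B n = 𝔹_n` are the complete Bell polynomials, defined by the exponential
generating function identity `exp(Σ_{j≥1} X_j t^j/j!) = Σ_n 𝔹_n t^n/n!` (expressed by
extracting the `t^n` coefficient). -/
theorem iteratedDeriv_eq_bell (B : ℕ → MvPolynomial ℕ ℚ)
    (hB0 : B 0 = 1)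
    (hB : ∀ n : ℕ, (PowerSeries.coeff (R := MvPolynomial ℕ ℚ) n)
        (∑ m ∈ Finset.range (n + 1), (m.factorial : ℚ)⁻¹ •
          (∑ j ∈ Finset.Icc 1 n, PowerSeries.monomial (R := MvPolynomial ℕ ℚ) j
              ((j.factorial : ℚ)⁻¹ • MvPolynomial.X j)) ^ m)
        = (n.factorial : ℚ)⁻¹ • B n)
    (D : Set ℂ) (hD : IsOpen D) (f g : ℂ → ℂ)
    (hf : DifferentiableOn ℂ f D) (hg : DifferentiableOn ℂ g D)
    (hfg : ∀ s ∈ D, deriv f s = f s * g s) :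
    ∀ s ∈ D, ∀ n : ℕ, iteratedDeriv n f s =
      f s * MvPolynomial.aeval (fun j : ℕ => iteratedDeriv (j - 1) g s) (B n) := by
  have hf' : AnalyticOnNhd ℂ f D := hf.analyticOnNhd hD
  have hg' : AnalyticOnNhd ℂ g D := hg.analyticOnNhd hD
  suffices H : ∀ n : ℕ, ∀ s ∈ D, iteratedDeriv n f s =
      f s * MvPolynomial.aeval (fun j : ℕ => iteratedDeriv (j - 1) g s) (B n) by
    exact fun s hs n => H n s hs
  intro n
  induction n using Nat.strong_induction_on with
  | _ n IH =>
    match n with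
    | 0 =>
      intro s hs
      simp [hB0, iteratedDeriv_zero]
    | (n+1) =>
      intro s hs
      have hstep : iteratedDeriv (n+1) f s = iteratedDeriv n (fun y => f y * g y) s := by
        rw [iteratedDeriv_succ']
        have hev : deriv f =ᶠ[nhds s] (fun y => f y * g y) :=
          Filter.eventually_of_mem (hD.mem_nhds hs) hfg
        exact (iteratedDeriv_eventuallyEq hev n).self_of_nhds
      rw [hstep, leibniz_aux hD hf' hg' n s hs]
      have hIH : ∀ k ∈ Finset.range (n+1), ((n.choose k : ℕ) : ℂ) *
          (iteratedDeriv k f s * iteratedDeriv (n - k) g s)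
          = ((n.choose k : ℕ) : ℂ) * ((f s *
              MvPolynomial.aeval (fun j : ℕ => iteratedDeriv (j - 1) g s) (B k)) *
            iteratedDeriv (n - k) g s) := by
        intro k hk
        rw [Finset.mem_range] at hk
        rw [IH k (by omega) s hs]
      rw [Finset.sum_congr rfl hIH, bell_recurrence B hB n, map_sum]
      simp only [map_smul, map_mul, MvPolynomial.aeval_X, Nat.add_sub_cancel, Rat.smul_def,
        Rat.cast_natCast, Finset.mul_sum]
      conv_rhs => rw [← Finset.sum_range_reflect]
      refine Finset.sum_congr rfl fun j hj => ?_
      rw [Finset.mem_range] at hj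
      rw [show n + 1 - 1 - j = n - j from by omega, Nat.sub_sub_self (by omega : j ≤ n),
        Nat.choose_symm (by omega : j ≤ n)]
      ring
end

section
/- For integers u, v with 1 ≤ u < v, ζ(0, u/v) = (1/(πv)) Σ_{k=1}^{v} γ_0(k/v) sin(2πku/v), where γ_0(x) = -ψ(x) is the zeroth generalized Stieltjes constant (the constant term in the Laurent expansion of ζ(s,x) at s = 1); for u = v, ζ(0, 1) = -1/2. -/
open Finset

open Complex HurwitzZeta Filter Topology in
private lemma aux_eqOn_compl_one {f g : ℂ → ℂ}
    (hf : DifferentiableOn ℂ f {(1 : ℂ)}ᶜ) (hg : DifferentiableOn ℂ g {(1 : ℂ)}ᶜ)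
    (h : ∀ s : ℂ, 1 < s.re → f s = g s) : ∀ s : ℂ, s ≠ 1 → f s = g s := by
  have hUo : IsOpen ({(1:ℂ)}ᶜ) := isOpen_compl_singleton
  have hf' : AnalyticOnNhd ℂ f {(1:ℂ)}ᶜ := hf.analyticOnNhd hUo
  have hg' : AnalyticOnNhd ℂ g {(1:ℂ)}ᶜ := hg.analyticOnNhd hUo
  have hUc : IsPreconnected ({(1:ℂ)}ᶜ) :=
    (isConnected_compl_singleton_of_one_lt_rank
      (rank_real_complex ▸ Nat.one_lt_ofNat) _).isPreconnected
  have h2 : (2:ℂ) ∈ ({(1:ℂ)}ᶜ : Set ℂ) := by norm_num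
  intro s hs
  refine hf'.eqOn_of_preconnected_of_eventuallyEq hg' hUc h2 ?_ hs
  have hV : {z : ℂ | 1 < z.re} ∈ 𝓝 (2:ℂ) :=
    (continuous_re.isOpen_preimage _ isOpen_Ioi).mem_nhds (by norm_num)
  filter_upwards [hV] with z hz using h z hz

private lemma aux_eq_at_one {f g : ℂ → ℂ} (hf : Continuous f) (hg : Continuous g)
    (h : ∀ s : ℂ, s ≠ 1 → f s = g s) : f 1 = g 1 := by
  have := hf.ext_on (dense_compl_singleton (1:ℂ)) hg (fun s hs => h s hs)
  exact congrFun this 1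

private lemma aux_sum_Icc (v : ℕ) [NeZero v] (g : ZMod v → ℂ) :
    ∑ k ∈ Finset.Icc 1 v, g (k : ZMod v) = ∑ j : ZMod v, g j := by
  have hv : 0 < v := Nat.pos_of_ne_zero (NeZero.ne v)
  refine Finset.sum_nbij' (fun k ↦ (k : ZMod v)) (fun j ↦ if j = 0 then v else j.val)
    ?_ ?_ ?_ ?_ ?_
  · intro k hk; exact Finset.mem_univ _
  · intro j _
    by_cases h : j = 0
    · simp [h, Finset.mem_Icc, hv, Nat.one_le_iff_ne_zero.mpr (NeZero.ne v)]
    · simp only [h, if_neg h, Finset.mem_Icc]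
      exact ⟨Nat.one_le_iff_ne_zero.mpr (fun h0 => h ((ZMod.val_eq_zero j).mp h0)),
        (ZMod.val_lt j).le⟩
  · intro k hk
    rw [Finset.mem_Icc] at hk
    rcases eq_or_lt_of_le hk.2 with rfl | hlt
    · simp
    · have hne : (k : ZMod v) ≠ 0 := by
        intro h0
        have := ZMod.val_natCast_of_lt hlt
        rw [h0, ZMod.val_zero] at this
        omega
      simp only [if_neg hne, ZMod.val_natCast_of_lt hlt]
  · intro j _
    by_cases h : j = 0
    · simp [h]
    · simp [if_neg h, ZMod.natCast_zmod_val]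
  · intro k hk; rfl

open Complex HurwitzZeta Filter Topology in
private noncomputable def Phi (u v : ℕ) [NeZero v] : ZMod v → ℂ :=
  fun j => (ZMod.stdAddChar ((u : ZMod v) * j) - ZMod.stdAddChar (-(u : ZMod v) * j)) / (2 * I)

open Complex HurwitzZeta Filter Topology in
private lemma Phi_natCast (u v : ℕ) [NeZero v] (k : ℕ) :
    Phi u v (k : ZMod v) = ((Real.sin (2 * Real.pi * k * u / v) : ℝ) : ℂ) := by
  set θ : ℝ := 2 * Real.pi * k * u / v with hθ
  have e1 : ZMod.stdAddChar ((u : ZMod v) * (k : ZMod v)) = Complex.exp ((θ : ℂ) * I) := by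
    have h : ((u : ZMod v) * (k : ZMod v)) = (((u * k : ℕ) : ℤ) : ZMod v) := by push_cast; ring
    rw [h, ZMod.stdAddChar_coe]
    congr 1
    push_cast [hθ]
    ring
  have e2 : ZMod.stdAddChar (-(u : ZMod v) * (k : ZMod v)) = Complex.exp ((↑(-θ) : ℂ) * I) := by
    have h : (-(u : ZMod v) * (k : ZMod v)) = ((-(u * k : ℕ) : ℤ) : ZMod v) := by push_cast; ring
    rw [h, ZMod.stdAddChar_coe]
    congr 1
    push_cast [hθ]
    ring
  rw [Phi, e1, e2, Complex.exp_mul_I, Complex.exp_mul_I, Complex.ofReal_neg, Complex.cos_neg,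
    Complex.sin_neg, ← Complex.ofReal_sin]
  have hI : (I : ℂ) ≠ 0 := I_ne_zero
  field_simp
  ring

open Complex HurwitzZeta Filter Topology in
private lemma Phi_sum_zero {u v : ℕ} [NeZero v] (hu0 : (u : ZMod v) ≠ 0) :
    ∑ j : ZMod v, Phi u v j = 0 := by
  classical
  have s1 : ∑ j : ZMod v, ZMod.stdAddChar ((u : ZMod v) * j) = 0 := by
    have h := AddChar.sum_mulShift (R := ZMod v) ((u : ZMod v)) (ZMod.isPrimitive_stdAddChar v)
    rw [if_neg hu0] at h
    push_cast at h
    rw [← h]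
    exact Finset.sum_congr rfl (fun j _ => by rw [mul_comm])
  have s2 : ∑ j : ZMod v, ZMod.stdAddChar (-(u : ZMod v) * j) = 0 := by
    have h := AddChar.sum_mulShift (R := ZMod v) (-(u : ZMod v)) (ZMod.isPrimitive_stdAddChar v)
    rw [if_neg (neg_ne_zero.mpr hu0)] at h
    push_cast at h
    rw [← h]
    exact Finset.sum_congr rfl (fun j _ => by rw [mul_comm])
  simp only [Phi, ← Finset.sum_div]
  rw [Finset.sum_sub_distrib, s1, s2]
  simp

open Complex HurwitzZeta Filter Topology in
private lemma Phi_LFunction {u v : ℕ} [NeZero v] (hu0 : (u : ZMod v) ≠ 0) (s : ℂ) :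
    ZMod.LFunction (Phi u v) s = sinZeta (ZMod.toAddCircle (u : ZMod v)) s := by
  have h1 := ZMod.LFunction_stdAddChar_eq_expZeta (u : ZMod v) s (Or.inl hu0)
  have h2 := ZMod.LFunction_stdAddChar_eq_expZeta (-(u : ZMod v)) s
    (Or.inl (neg_ne_zero.mpr hu0))
  have hterm : ∀ j : ZMod v, Phi u v j * hurwitzZeta (ZMod.toAddCircle j) s =
      (ZMod.stdAddChar ((u : ZMod v) * j) * hurwitzZeta (ZMod.toAddCircle j) s
       - ZMod.stdAddChar (-(u : ZMod v) * j) * hurwitzZeta (ZMod.toAddCircle j) s) / (2 * I) := by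
    intro j; rw [Phi]; ring
  have hL : ZMod.LFunction (Phi u v) s =
      (ZMod.LFunction (fun k => ZMod.stdAddChar ((u : ZMod v) * k)) s
        - ZMod.LFunction (fun k => ZMod.stdAddChar (-(u : ZMod v) * k)) s) / (2 * I) := by
    simp only [ZMod.LFunction, hterm, ← Finset.sum_div]
    rw [Finset.sum_sub_distrib]
    ring
  rw [hL, h1, h2, map_neg, sinZeta_eq]

open Complex HurwitzZeta Filter Topology in
private lemma hz_zero_eq {A : UnitAddCircle} (hA : A ≠ 0) :
    hurwitzZeta A 0 = sinZeta A 1 / (Real.pi : ℂ) := by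
  have hs : ∀ n : ℕ, (1 : ℂ) ≠ -n := by
    intro n h
    have := congrArg Complex.re h
    simp at this
    linarith [Nat.cast_nonneg (α := ℝ) n]
  have h := hurwitzZeta_one_sub A hs (Or.inl hA)
  have e1 : Complex.exp (-(Real.pi : ℂ) * I * 1 / 2) = -I := by
    rw [show (-(Real.pi : ℂ) * I * 1 / 2 : ℂ) = ((-(Real.pi / 2) : ℝ) : ℂ) * I by
      push_cast; ring, Complex.exp_mul_I, ← Complex.ofReal_cos, ← Complex.ofReal_sin]
    simp [Real.cos_pi_div_two, Real.sin_pi_div_two]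
  have e2 : Complex.exp ((Real.pi : ℂ) * I * 1 / 2) = I := by
    rw [show ((Real.pi : ℂ) * I * 1 / 2 : ℂ) = (((Real.pi / 2) : ℝ) : ℂ) * I by
      push_cast; ring, Complex.exp_mul_I, ← Complex.ofReal_cos, ← Complex.ofReal_sin]
    simp [Real.cos_pi_div_two, Real.sin_pi_div_two]
  rw [show (1 : ℂ) - 1 = 0 by ring] at h
  rw [h, e1, e2, Complex.Gamma_one, expZeta, expZeta, cosZeta_neg, sinZeta_neg, cpow_neg_one]
  have hπ : (Real.pi : ℂ) ≠ 0 := Complex.ofReal_ne_zero.mpr Real.pi_ne_zero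
  have h2π : (2 * (Real.pi : ℂ)) ≠ 0 := by
    intro h0; apply hπ; field_simp at h0; simpa using h0
  field_simp
  ring_nf
  rw [I_sq]
  ring

open Complex HurwitzZeta Filter Topology in
/-- Values at `s = 0` of the (analytically continued) Hurwitz zeta function `ζ(s, u/v)`:
for `u < v`, `ζ(0, u/v) = (1/(πv)) Σ_{k=1}^v γ₀(k/v) sin(2πku/v)`, where `γ₀(k/v) = G k 1`
is the constant term of the Laurent expansion of `ζ(s, k/v)` at `s = 1`; for `u = v`,
`ζ(0,1) = -1/2`.  Here `F` is the analytic continuation of `ζ(s, u/v)` and `G k` the entire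
continuation of `ζ(s, k/v) - 1/(s-1)`. -/
theorem hurwitzZeta_zero_value (u v : ℕ) (hu : 1 ≤ u) (huv : u ≤ v)
    (F : ℂ → ℂ) (hF : DifferentiableOn ℂ F {(1 : ℂ)}ᶜ)
    (hFeq : ∀ s : ℂ, 1 < s.re → F s = ∑' n : ℕ, ((n : ℂ) + (u : ℂ) / (v : ℂ)) ^ (-s))
    (G : ℕ → ℂ → ℂ) (hG : ∀ k, Differentiable ℂ (G k))
    (hGeq : ∀ k, 1 ≤ k → k ≤ v → ∀ s : ℂ, 1 < s.re →
      G k s = (∑' n : ℕ, ((n : ℂ) + (k : ℂ) / (v : ℂ)) ^ (-s)) - 1 / (s - 1)) :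
    (u < v → F 0 = 1 / ((Real.pi : ℂ) * (v : ℂ)) *
        ∑ k ∈ Finset.Icc 1 v, G k 1 * ((Real.sin (2 * Real.pi * k * u / v) : ℝ) : ℂ)) ∧
    (u = v → F 0 = -(1 / 2)) := by
  haveI : NeZero v := ⟨by omega⟩
  have hv0 : (v : ℂ) ≠ 0 := Nat.cast_ne_zero.mpr (by omega)
  have hvR : (0 : ℝ) < v := by exact_mod_cast Nat.pos_of_ne_zero (by omega)
  constructor
  · -- case u < v
    intro hlt
    have hu0 : (u : ZMod v) ≠ 0 := by
      rw [Ne, ZMod.natCast_eq_zero_iff]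
      intro h
      exact absurd (Nat.le_of_dvd (by omega) h) (by omega)
    set A : UnitAddCircle := ZMod.toAddCircle (u : ZMod v) with hAdef
    have hA0 : A ≠ 0 := by
      rw [hAdef, Ne, ZMod.toAddCircle_eq_zero]
      exact hu0
    -- F agrees with hurwitzZeta A away from 1
    have hF1 : ∀ s : ℂ, s ≠ 1 → F s = hurwitzZeta A s := by
      have hmem : ((u : ℝ) / v) ∈ Set.Icc (0 : ℝ) 1 := by
        constructor
        · positivity
        · rw [div_le_one hvR]; exact_mod_cast huv
      apply aux_eqOn_compl_one hF
      · intro s hs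
        exact (differentiableAt_hurwitzZeta A
          (Set.mem_compl_singleton_iff.mp hs)).differentiableWithinAt
      · intro s hs
        rw [hFeq s hs, hAdef, ZMod.toAddCircle_natCast,
          ← (hasSum_hurwitzZeta_of_one_lt_re hmem hs).tsum_eq]
        apply tsum_congr
        intro n
        rw [cpow_neg, ← one_div]
        congr 2
        push_cast
        ring
    -- each G k agrees with hurwitzZeta (k/v) - 1/(s-1) away from 1
    have hGk : ∀ k, 1 ≤ k → k ≤ v → ∀ s : ℂ, s ≠ 1 →
        G k s = hurwitzZeta (ZMod.toAddCircle (k : ZMod v)) s - 1 / (s - 1) := by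
      intro k h1 h2
      have hmem : ((k : ℝ) / v) ∈ Set.Icc (0 : ℝ) 1 := by
        constructor
        · positivity
        · rw [div_le_one hvR]; exact_mod_cast h2
      apply aux_eqOn_compl_one (hG k).differentiableOn
      · intro s hs
        have hs' : s ≠ 1 := Set.mem_compl_singleton_iff.mp hs
        exact ((differentiableAt_hurwitzZeta _ hs').sub
          ((differentiableAt_const _).div
            (differentiableAt_id.sub (differentiableAt_const _))
            (sub_ne_zero.mpr hs'))).differentiableWithinAt
      · intro s hs
        rw [hGeq k h1 h2 s hs, ZMod.toAddCircle_natCast,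
          ← (hasSum_hurwitzZeta_of_one_lt_re hmem hs).tsum_eq]
        congr 1
        apply tsum_congr
        intro n
        rw [cpow_neg, ← one_div]
        congr 2
        push_cast
        ring
    have hΦ0 : ∑ j : ZMod v, Phi u v j = 0 := Phi_sum_zero hu0
    set D : ℂ → ℂ :=
      fun s => ∑ k ∈ Finset.Icc 1 v, G k s * ((Real.sin (2 * Real.pi * k * u / v) : ℝ) : ℂ)
      with hDdef
    set E : ℂ → ℂ := fun s => (v : ℂ) ^ s * ZMod.LFunction (Phi u v) s with hEdef
    have hDdiff : Differentiable ℂ D := by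
      intro s
      apply DifferentiableAt.fun_sum
      intro k _
      exact ((hG k) s).mul_const _
    have hEdiff : Differentiable ℂ E :=
      (differentiable_id.const_cpow (Or.inl hv0)).mul
        (ZMod.differentiable_LFunction_of_sum_zero hΦ0)
    have hDE : ∀ s : ℂ, s ≠ 1 → D s = E s := by
      intro s hs
      have step1 : D s = ∑ k ∈ Finset.Icc 1 v,
          (hurwitzZeta (ZMod.toAddCircle (k : ZMod v)) s - 1 / (s - 1)) * Phi u v (k : ZMod v) := by
        apply Finset.sum_congr rfl
        intro k hk
        rw [Finset.mem_Icc] at hk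
        rw [hGk k hk.1 hk.2 s hs, Phi_natCast]
      rw [step1,
        aux_sum_Icc v (fun j => (hurwitzZeta (ZMod.toAddCircle j) s - 1 / (s - 1)) * Phi u v j)]
      have expand : ∑ j : ZMod v, (hurwitzZeta (ZMod.toAddCircle j) s - 1 / (s - 1)) * Phi u v j
          = ∑ j : ZMod v, Phi u v j * hurwitzZeta (ZMod.toAddCircle j) s
            - (∑ j : ZMod v, Phi u v j) * (1 / (s - 1)) := by
        rw [Finset.sum_mul, ← Finset.sum_sub_distrib]
        apply Finset.sum_congr rfl
        intro j _
        ring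
      rw [expand, hΦ0, zero_mul, sub_zero, hEdef]
      show _ = (v : ℂ) ^ s * ZMod.LFunction (Phi u v) s
      rw [ZMod.LFunction, ← mul_assoc, ← Complex.cpow_add _ _ hv0, add_neg_cancel, cpow_zero,
        one_mul]
    have hD1 : D 1 = E 1 := aux_eq_at_one hDdiff.continuous hEdiff.continuous hDE
    have hL1 : ZMod.LFunction (Phi u v) 1 = sinZeta A 1 := Phi_LFunction hu0 1
    have hE1 : E 1 = (v : ℂ) * sinZeta A 1 := by
      rw [hEdef]
      show (v : ℂ) ^ (1 : ℂ) * ZMod.LFunction (Phi u v) 1 = _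
      rw [cpow_one, hL1]
    have hπ : (Real.pi : ℂ) ≠ 0 := Complex.ofReal_ne_zero.mpr Real.pi_ne_zero
    rw [show F 0 = hurwitzZeta A 0 from hF1 0 (by norm_num), hz_zero_eq hA0]
    have : (∑ k ∈ Finset.Icc 1 v, G k 1 * ((Real.sin (2 * Real.pi * k * u / v) : ℝ) : ℂ))
        = (v : ℂ) * sinZeta A 1 := by rw [← hE1, ← hD1]
    rw [this]
    field_simp
  · -- case u = v
    intro huveq
    subst huveq
    have hF1 : ∀ s : ℂ, s ≠ 1 → F s = hurwitzZeta (((1 : ℝ) : UnitAddCircle)) s := by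
      have hmem : (1 : ℝ) ∈ Set.Icc (0 : ℝ) 1 := by norm_num
      apply aux_eqOn_compl_one hF
      · intro s hs
        exact (differentiableAt_hurwitzZeta _
          (Set.mem_compl_singleton_iff.mp hs)).differentiableWithinAt
      · intro s hs
        rw [hFeq s hs, ← (hasSum_hurwitzZeta_of_one_lt_re hmem hs).tsum_eq]
        apply tsum_congr
        intro n
        rw [cpow_neg, ← one_div]
        congr 2
        rw [div_self hv0]
        norm_num
    have hcoe : (((1 : ℝ) : UnitAddCircle)) = 0 := AddCircle.coe_period (1 : ℝ)
    rw [hF1 0 (by norm_num), hcoe, hurwitzZeta_zero, riemannZeta_zero]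
    norm_num
end

section
/- For a real x with 0 < x ≤ 1 and integer n ≥ 0, the generalized Stieltjes constant γ_n(x) (the coefficient in ζ(s,x) = 1/(s-1) + Σ_{n≥0}((-1)^n/n!)γ_n(x)(s-1)^n) satisfies γ_n(x) = lim_{m→∞} ( Σ_{k=0}^{m} (log^n(k+x))/(k+x) − log^{n+1}(m+x)/(n+1) ). -/
open Finset intervalIntegral
namespace SC

noncomputable def Dn (x : ℝ) (n m : ℕ) (s : ℂ) : ℂ :=
  (∑ k ∈ range (m+1), (-(Real.log ((k:ℝ)+x) : ℂ))^n
      * Complex.exp (-(Real.log ((k:ℝ)+x):ℂ) * s))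
  - ∫ t in (1:ℝ)..((m:ℝ)+x), (-(Real.log t : ℂ))^n * Complex.exp (-(Real.log t : ℂ) * s)

lemma hasDerivAt_term (c : ℂ) (n : ℕ) (s : ℂ) :
    HasDerivAt (fun s => (-c)^n * Complex.exp (-c*s)) ((-c)^(n+1) * Complex.exp (-c*s)) s := by
  have h : HasDerivAt (fun y : ℂ => -c * y) (-c) s := by
    simpa using (hasDerivAt_id s).const_mul (-c)
  have := (h.cexp).const_mul ((-c)^n)
  refine this.congr_deriv ?_
  ring

lemma contOn_integrand (n : ℕ) (s : ℂ) {A : Set ℝ} (hA : ∀ t ∈ A, t ≠ 0) :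
    ContinuousOn (fun t : ℝ => (-(Real.log t : ℂ))^n * Complex.exp (-(Real.log t : ℂ) * s)) A := by
  have hlog : ContinuousOn (fun t : ℝ => (Real.log t : ℂ)) A :=
    Complex.continuous_ofReal.comp_continuousOn (Real.continuousOn_log.mono hA)
  exact ((hlog.neg.pow n).mul
    (Complex.continuous_exp.comp_continuousOn (hlog.neg.mul continuousOn_const)))

lemma intervalIntegrable_integrand (n : ℕ) (s : ℂ) {a b : ℝ} (ha : 0 < a) (hb : 0 < b) :
    IntervalIntegrable (fun t : ℝ => (-(Real.log t : ℂ))^n * Complex.exp (-(Real.log t : ℂ) * s))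
      MeasureTheory.volume a b := by
  apply ContinuousOn.intervalIntegrable
  apply contOn_integrand
  intro t ht
  rcases Set.mem_uIcc.1 ht with h | h
  · exact (lt_of_lt_of_le ha h.1).ne'
  · exact (lt_of_lt_of_le hb h.1).ne'

lemma abs_log_le {M t : ℝ} (hM : 0 < M) (ht : t ∈ Set.uIoc (1:ℝ) M) :
    |Real.log t| ≤ |Real.log M| := by
  rcases le_total 1 M with h | h
  · rw [Set.uIoc_of_le h] at ht
    have h1 : 0 ≤ Real.log t := Real.log_nonneg ht.1.le
    have h2 : Real.log t ≤ Real.log M := Real.log_le_log (lt_of_le_of_lt one_pos.le ht.1) ht.2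
    rw [abs_of_nonneg h1, abs_of_nonneg (Real.log_nonneg h)]
    exact h2
  · rw [Set.uIoc_of_ge h] at ht
    have h1 : Real.log t ≤ 0 := Real.log_nonpos (hM.trans ht.1).le ht.2
    have h2 : Real.log M ≤ Real.log t := Real.log_le_log hM ht.1.le
    rw [abs_of_nonpos h1, abs_of_nonpos (Real.log_nonpos hM.le h)]
    linarith

lemma hasDerivAt_intpart {M : ℝ} (hM : 0 < M) (n : ℕ) (s₀ : ℂ) :
    HasDerivAt (fun s => ∫ t in (1:ℝ)..M, (-(Real.log t : ℂ))^n * Complex.exp (-(Real.log t:ℂ) * s))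
      (∫ t in (1:ℝ)..M, (-(Real.log t : ℂ))^(n+1) * Complex.exp (-(Real.log t:ℂ) * s₀)) s₀ := by
  set B : ℝ := |Real.log M| with hB
  have hmeas : ∀ (s : ℂ), MeasureTheory.AEStronglyMeasurable
      (fun t : ℝ => (-(Real.log t : ℂ))^n * Complex.exp (-(Real.log t:ℂ) * s))
      (MeasureTheory.volume.restrict (Set.uIoc (1:ℝ) M)) := by
    intro s
    apply ContinuousOn.aestronglyMeasurable _ measurableSet_uIoc
    apply contOn_integrand
    intro t ht
    have := ht.1
    have h0 : 0 < min 1 M := lt_min one_pos hM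
    exact (h0.trans this).ne'
  have hmeas' : ∀ (s : ℂ), MeasureTheory.AEStronglyMeasurable
      (fun t : ℝ => (-(Real.log t : ℂ))^(n+1) * Complex.exp (-(Real.log t:ℂ) * s))
      (MeasureTheory.volume.restrict (Set.uIoc (1:ℝ) M)) := by
    intro s
    apply ContinuousOn.aestronglyMeasurable _ measurableSet_uIoc
    apply contOn_integrand
    intro t ht
    have h0 : 0 < min 1 M := lt_min one_pos hM
    exact (h0.trans ht.1).ne'
  have key := intervalIntegral.hasDerivAt_integral_of_dominated_loc_of_deriv_le
    (F := fun (s : ℂ) (t : ℝ) => (-(Real.log t : ℂ))^n * Complex.exp (-(Real.log t:ℂ) * s))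
    (F' := fun (s : ℂ) (t : ℝ) => (-(Real.log t : ℂ))^(n+1) * Complex.exp (-(Real.log t:ℂ) * s))
    (bound := fun _ => B^(n+1) * Real.exp (B * (|s₀.re| + 1))) (x₀ := s₀)
    (Metric.ball_mem_nhds s₀ one_pos)
    (Filter.Eventually.of_forall (fun s => hmeas s))
    (intervalIntegrable_integrand n s₀ one_pos hM)
    (hmeas' s₀)
    ?_ ?_ ?_
  · exact key.2
  · -- bound
    apply MeasureTheory.ae_of_all
    intro t ht s hs
    have htpos : 0 < t := (lt_min one_pos hM).trans ht.1
    have habs : |Real.log t| ≤ B := abs_log_le hM ht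
    rw [norm_mul, norm_pow, norm_neg, Complex.norm_real,
      Real.norm_eq_abs, Complex.norm_exp]
    have hre : (-(Real.log t:ℂ) * s).re = -(Real.log t) * s.re := by
      simp [Complex.mul_re]
    rw [hre]
    have h1 : |Real.log t|^(n+1) ≤ B^(n+1) :=
      pow_le_pow_left₀ (abs_nonneg _) habs _
    have h2 : -(Real.log t) * s.re ≤ B * (|s₀.re| + 1) := by
      have : -(Real.log t) * s.re ≤ |Real.log t| * |s.re| := by
        calc -(Real.log t) * s.re ≤ |(-(Real.log t)) * s.re| := le_abs_self _
        _ = |Real.log t| * |s.re| := by rw [abs_mul, abs_neg]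
      refine this.trans (mul_le_mul habs ?_ (abs_nonneg _) (abs_nonneg _ |>.trans habs))
      have := Complex.abs_re_le_norm (s - s₀)
      have hd : dist s s₀ < 1 := Metric.mem_ball.1 hs
      rw [Complex.dist_eq] at hd
      have : |s.re - s₀.re| ≤ ‖s - s₀‖ := by
        simpa using Complex.abs_re_le_norm (s - s₀)
      have h3 : |s.re| ≤ |s₀.re| + |s.re - s₀.re| := by
        calc |s.re| = |s₀.re + (s.re - s₀.re)| := by ring_nf
        _ ≤ |s₀.re| + |s.re - s₀.re| := abs_add_le _ _
      linarith
    exact mul_le_mul h1 (Real.exp_le_exp.2 h2) (Real.exp_pos _).le (by positivity)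
  · exact intervalIntegrable_const
  · apply MeasureTheory.ae_of_all
    intro t ht s hs
    exact hasDerivAt_term _ n s

lemma hasDerivAt_Dn {x : ℝ} (hx0 : 0 < x) (n m : ℕ) (s : ℂ) :
    HasDerivAt (Dn x n m) (Dn x (n+1) m s) s := by
  have hsum : HasDerivAt
      (fun s => ∑ k ∈ range (m+1), (-(Real.log ((k:ℝ)+x) : ℂ))^n
        * Complex.exp (-(Real.log ((k:ℝ)+x):ℂ) * s))
      (∑ k ∈ range (m+1), (-(Real.log ((k:ℝ)+x) : ℂ))^(n+1)
        * Complex.exp (-(Real.log ((k:ℝ)+x):ℂ) * s)) s :=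
    HasDerivAt.fun_sum (fun k _ => hasDerivAt_term _ n s)
  exact hsum.sub (hasDerivAt_intpart (by positivity) n s)

lemma iteratedDeriv_Dn {x : ℝ} (hx0 : 0 < x) (n m : ℕ) (s : ℂ) :
    iteratedDeriv n (Dn x 0 m) s = Dn x n m s := by
  induction n generalizing s with
  | zero => simp
  | succ n ih =>
    rw [iteratedDeriv_succ]
    have : iteratedDeriv n (Dn x 0 m) = Dn x n m := funext ih
    rw [this]
    exact (hasDerivAt_Dn hx0 n m s).deriv

lemma Dn_one {x : ℝ} (hx0 : 0 < x) (n m : ℕ) :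
    Dn x n m 1 = (-1:ℂ)^n * ((((∑ k ∈ range (m+1), (Real.log ((k:ℝ)+x))^n / ((k:ℝ)+x)) -
      (Real.log ((m:ℝ)+x))^(n+1) / ((n:ℝ)+1) : ℝ)) : ℂ) := by
  have hM : 0 < (m:ℝ) + x := by positivity
  have hexp : ∀ t : ℝ, 0 < t → Complex.exp (-(Real.log t : ℂ) * 1) = ((t⁻¹ : ℝ) : ℂ) := by
    intro t ht
    rw [mul_one, ← Complex.ofReal_neg, ← Complex.ofReal_exp, Real.exp_neg, Real.exp_log ht]
  have hsum : ∀ k ∈ range (m+1), (-(Real.log ((k:ℝ)+x) : ℂ))^n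
      * Complex.exp (-(Real.log ((k:ℝ)+x):ℂ) * 1)
      = (-1:ℂ)^n * (((Real.log ((k:ℝ)+x))^n / ((k:ℝ)+x) : ℝ) : ℂ) := by
    intro k _
    have hk : (0:ℝ) < (k:ℝ) + x := by positivity
    rw [hexp _ hk]
    push_cast
    ring
  have hint : (∫ t in (1:ℝ)..((m:ℝ)+x), (-(Real.log t : ℂ))^n * Complex.exp (-(Real.log t : ℂ) * 1))
      = (-1:ℂ)^n * (((Real.log ((m:ℝ)+x))^(n+1) / ((n:ℝ)+1) : ℝ) : ℂ) := by
    have h1 : ∀ t ∈ Set.uIcc (1:ℝ) ((m:ℝ)+x), (-(Real.log t : ℂ))^n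
        * Complex.exp (-(Real.log t : ℂ) * 1)
        = ((((-1:ℝ))^n * ((Real.log t)^n * t⁻¹) : ℝ) : ℂ) := by
      intro t ht
      have ht0 : (0:ℝ) < t := (lt_min one_pos hM).trans_le ht.1
      rw [hexp _ ht0]
      push_cast
      ring
    rw [intervalIntegral.integral_congr h1]
    rw [intervalIntegral.integral_ofReal]
    rw [intervalIntegral.integral_const_mul]
    have h3 : (∫ t in (1:ℝ)..((m:ℝ)+x), (Real.log t)^n * t⁻¹)
        = (Real.log ((m:ℝ)+x))^(n+1)/((n:ℝ)+1) := by
      have hd : ∀ t ∈ Set.uIcc (1:ℝ) ((m:ℝ)+x),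
          HasDerivAt (fun u => (Real.log u)^(n+1)/((n:ℝ)+1)) ((Real.log t)^n * t⁻¹) t := by
        intro t ht
        have ht0 : (0:ℝ) < t := (lt_min one_pos hM).trans_le ht.1
        have h := ((Real.hasDerivAt_log ht0.ne').pow (n+1)).div_const ((n:ℝ)+1)
        refine h.congr_deriv ?_
        have hne : ((n:ℝ)+1) ≠ 0 := by positivity
        field_simp
        push_cast
        ring
      have hint' : IntervalIntegrable (fun t => (Real.log t)^n * t⁻¹)
          MeasureTheory.volume 1 ((m:ℝ)+x) := by
        apply ContinuousOn.intervalIntegrable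
        apply ContinuousOn.mul
        · exact (Real.continuousOn_log.mono
            (fun t ht => ((lt_min one_pos hM).trans_le ht.1).ne')).pow n
        · exact continuousOn_inv₀.mono
            (fun t ht => ((lt_min one_pos hM).trans_le ht.1).ne')
      rw [intervalIntegral.integral_eq_sub_of_hasDerivAt hd hint']
      simp
    rw [h3]
    push_cast
    ring
  unfold Dn
  rw [Finset.sum_congr rfl hsum, hint, ← Finset.mul_sum]
  rw [← mul_sub]
  congr 1
  push_cast
  ring

lemma norm_exp_mul {t : ℝ} (ht : 0 < t) (s : ℂ) :
    ‖Complex.exp (-(Real.log t : ℂ) * s)‖ = t ^ (-s.re) := by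
  rw [Complex.norm_exp]
  rw [Real.rpow_def_of_pos ht]
  congr 1
  simp [Complex.mul_re]

lemma hasDerivAt_t {τ : ℝ} (hτ : 0 < τ) (s : ℂ) :
    HasDerivAt (fun t : ℝ => Complex.exp (-(Real.log t : ℂ) * s))
      (-s * (τ:ℂ)⁻¹ * Complex.exp (-(Real.log τ : ℂ) * s)) τ := by
  have h1 : HasDerivAt (fun t : ℝ => (Real.log t : ℂ)) ((τ⁻¹ : ℝ) : ℂ) τ :=
    (Real.hasDerivAt_log hτ.ne').ofReal_comp
  have h2 : HasDerivAt (fun t : ℝ => -(Real.log t : ℂ) * s) (-(τ⁻¹:ℝ) * s) τ :=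
    h1.neg.mul_const s
  have := h2.cexp
  convert this using 1
  push_cast
  ring

lemma summable_aux {x : ℝ} (hx0 : 0 < x) {p : ℝ} (hp : 1 < p) :
    Summable (fun k : ℕ => ((k:ℝ) + x) ^ (-p)) := by
  rw [← summable_nat_add_iff 1]
  have hg : Summable (fun k : ℕ => (((k:ℝ) + 1)) ^ (-p)) := by
    have := (summable_nat_add_iff 1).2 (Real.summable_nat_rpow.2 (by linarith : -p < -1))
    refine this.congr (fun k => ?_)
    push_cast
    ring_nf
  apply Summable.of_nonneg_of_le _ _ hg
  · intro k
    positivity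
  · intro k
    apply Real.rpow_le_rpow_of_nonpos (by positivity)
    · push_cast; linarith
    · linarith

lemma bk_bound {x : ℝ} (hx0 : 0 < x) (k : ℕ) (hk : 1 ≤ k) {s : ℂ} {R : ℝ}
    (hs : (1:ℝ)/2 ≤ s.re) (hR : ‖s‖ ≤ R) :
    ‖Complex.exp (-(Real.log ((k:ℝ)+1+x) : ℂ) * s)
      - ∫ t in ((k:ℝ)+x)..((k:ℝ)+1+x), Complex.exp (-(Real.log t : ℂ) * s)‖
      ≤ R * ((k:ℝ)+x) ^ (-(3:ℝ)/2) := by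
  set c : ℝ := (k:ℝ) + x with hc
  have hc1 : 1 ≤ c := by
    have : (1:ℝ) ≤ (k:ℝ) := by exact_mod_cast hk
    simp only [hc]; linarith
  have hc0 : 0 < c := lt_of_lt_of_le one_pos hc1
  have hRnn : 0 ≤ R := le_trans (norm_nonneg s) hR
  have hck : (k:ℝ)+1+x = c+1 := by rw [hc]; ring
  rw [hck]
  -- continuity of integrand on the interval
  have hcont : ContinuousOn (fun t : ℝ => Complex.exp (-(Real.log t : ℂ) * s))
      (Set.uIcc c (c+1)) := by
    have := contOn_integrand 0 s (A := Set.uIcc c (c+1)) (by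
      intro t ht
      rcases Set.mem_uIcc.1 ht with h | h
      · exact (hc0.trans_le h.1).ne'
      · exact ((by linarith : (0:ℝ) < c + 1).trans_le h.1).ne')
    simpa using this
  have hii : IntervalIntegrable (fun t : ℝ => Complex.exp (-(Real.log t : ℂ) * s))
      MeasureTheory.volume c (c+1) := hcont.intervalIntegrable
  -- rewrite the constant as an integral
  have hconst : Complex.exp (-(Real.log (c+1) : ℂ) * s)
      = ∫ t in c..(c+1), Complex.exp (-(Real.log (c+1) : ℂ) * s) := by
    rw [intervalIntegral.integral_const]
    simp
  rw [hconst, ← intervalIntegral.integral_sub intervalIntegrable_const hii]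
  apply le_trans (intervalIntegral.norm_integral_le_of_norm_le_const
    (C := R * c ^ (-(3:ℝ)/2)) ?_)
  · simp
  · intro t ht
    rw [Set.uIoc_of_le (by linarith : c ≤ c + 1)] at ht
    -- mean value estimate on [c, c+1]
    have hmvt := Convex.norm_image_sub_le_of_norm_hasDerivWithin_le
      (f := fun t : ℝ => Complex.exp (-(Real.log t : ℂ) * s))
      (f' := fun t : ℝ => -s * (t:ℂ)⁻¹ * Complex.exp (-(Real.log t : ℂ) * s))
      (C := R * c ^ (-(3:ℝ)/2)) (s := Set.Icc c (c+1)) (x := t) (y := c+1)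
      (fun τ hτ => ((hasDerivAt_t (hc0.trans_le hτ.1) s).hasDerivWithinAt))
      ?_ (convex_Icc _ _) ?_ ?_
    · have h1 : ‖Complex.exp (-(Real.log (c+1) : ℂ) * s)
          - Complex.exp (-(Real.log t : ℂ) * s)‖ ≤ R * c ^ (-(3:ℝ)/2) * ‖(c+1) - t‖ := hmvt
      have h2 : ‖(c+1) - t‖ ≤ 1 := by
        rw [Real.norm_eq_abs, abs_of_nonneg (by linarith [ht.2] : (0:ℝ) ≤ c + 1 - t)]
        linarith [ht.1]
      calc ‖Complex.exp (-(Real.log (c+1) : ℂ) * s) - Complex.exp (-(Real.log t : ℂ) * s)‖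
          ≤ R * c ^ (-(3:ℝ)/2) * ‖(c+1) - t‖ := h1
        _ ≤ R * c ^ (-(3:ℝ)/2) * 1 := by
            apply mul_le_mul_of_nonneg_left h2
            positivity
        _ = R * c ^ (-(3:ℝ)/2) := mul_one _
    · -- derivative bound
      intro τ hτ
      have hτ0 : 0 < τ := hc0.trans_le hτ.1
      rw [norm_mul, norm_mul, norm_neg, norm_inv, Complex.norm_real,
        Real.norm_eq_abs, abs_of_pos hτ0, norm_exp_mul hτ0]
      have e1 : τ⁻¹ * τ ^ (-s.re) = τ ^ (-s.re - 1) := by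
        rw [Real.rpow_sub hτ0, Real.rpow_one]
        ring
      rw [mul_assoc, e1]
      have e2 : τ ^ (-s.re - 1) ≤ c ^ (-s.re - 1) :=
        Real.rpow_le_rpow_of_nonpos hc0 hτ.1 (by linarith)
      have e3 : c ^ (-s.re - 1) ≤ c ^ (-(3:ℝ)/2) :=
        Real.rpow_le_rpow_of_exponent_le hc1 (by linarith)
      have := mul_le_mul hR (e2.trans e3) (by positivity) hRnn
      exact this
    · exact ⟨ht.1.le, ht.2⟩
    · exact ⟨by linarith, le_refl _⟩

lemma intervalIntegrable_exp (s : ℂ) {a b : ℝ} (ha : 0 < a) (hb : 0 < b) :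
    IntervalIntegrable (fun t : ℝ => Complex.exp (-(Real.log t : ℂ) * s))
      MeasureTheory.volume a b := by
  simpa using intervalIntegrable_integrand 0 s ha hb

lemma Dn_diff {x : ℝ} (hx0 : 0 < x) {m m' : ℕ} (h : m ≤ m') (s : ℂ) :
    Dn x 0 m' s - Dn x 0 m s = ∑ i ∈ range (m' - m),
      (Complex.exp (-(Real.log (((m+i:ℕ):ℝ)+1+x) : ℂ) * s)
        - ∫ t in (((m+i:ℕ):ℝ)+x)..(((m+i:ℕ):ℝ)+1+x), Complex.exp (-(Real.log t : ℂ) * s)) := by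
  have hMj : ∀ j : ℕ, (0:ℝ) < (j:ℝ) + x := fun j => by positivity
  have hsum : (∑ k ∈ range (m'+1), Complex.exp (-(Real.log ((k:ℝ)+x) : ℂ) * s))
      - (∑ k ∈ range (m+1), Complex.exp (-(Real.log ((k:ℝ)+x) : ℂ) * s))
      = ∑ i ∈ range (m'-m), Complex.exp (-(Real.log (((m+i:ℕ):ℝ)+1+x) : ℂ) * s) := by
    rw [← Finset.sum_Ico_eq_sub _ (by omega : m+1 ≤ m'+1), Finset.sum_Ico_eq_sum_range]
    have hc : m' + 1 - (m + 1) = m' - m := by omega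
    rw [hc]
    apply Finset.sum_congr rfl
    intro i _
    congr 2
    push_cast
    ring
  have hint : (∫ t in (1:ℝ)..((m':ℝ)+x), Complex.exp (-(Real.log t : ℂ) * s))
      - (∫ t in (1:ℝ)..((m:ℝ)+x), Complex.exp (-(Real.log t : ℂ) * s))
      = ∑ i ∈ range (m'-m), ∫ t in (((m+i:ℕ):ℝ)+x)..(((m+i:ℕ):ℝ)+1+x),
          Complex.exp (-(Real.log t : ℂ) * s) := by
    rw [intervalIntegral.integral_interval_sub_left
      (intervalIntegrable_exp s one_pos (hMj m')) (intervalIntegrable_exp s one_pos (hMj m))]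
    have hadj := intervalIntegral.sum_integral_adjacent_intervals
      (a := fun i : ℕ => ((m+i:ℕ):ℝ)+x) (n := m'-m)
      (f := fun t : ℝ => Complex.exp (-(Real.log t : ℂ) * s))
      (μ := MeasureTheory.volume)
      (fun i _ => intervalIntegrable_exp s (hMj _) (hMj _))
    have h0 : ((m+0:ℕ):ℝ)+x = (m:ℝ)+x := by push_cast; ring
    have h1 : ((m+(m'-m):ℕ):ℝ)+x = (m':ℝ)+x := by
      have : m + (m'-m) = m' := by omega
      rw [this]
    simp only [Nat.add_zero, h1] at hadj
    rw [← hadj]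
    apply Finset.sum_congr rfl
    intro i _
    congr 1
    push_cast
    ring
  unfold Dn
  simp only [pow_zero, one_mul]
  rw [Finset.sum_sub_distrib, ← hsum, ← hint]
  ring

lemma unif_cauchy {x : ℝ} (hx0 : 0 < x) {K : Set ℂ} (hK : ∀ s ∈ K, (1:ℝ)/2 ≤ s.re)
    {R : ℝ} (hR : ∀ s ∈ K, ‖s‖ ≤ R) (hR0 : 0 < R) :
    UniformCauchySeqOn (fun m s => Dn x 0 m s) Filter.atTop K := by
  rw [Metric.uniformCauchySeqOn_iff]
  intro ε hε
  set u : ℕ → ℝ := fun k => ((k:ℝ)+x) ^ (-(3:ℝ)/2) with hu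
  have hsm : Summable u := by
    have := summable_aux hx0 (p := 3/2) (by norm_num)
    convert this using 2
    simp only [hu]
    norm_num
  have hcauchy : CauchySeq (fun j => ∑ k ∈ range j, u k) :=
    hsm.hasSum.tendsto_sum_nat.cauchySeq
  rw [Metric.cauchySeq_iff] at hcauchy
  obtain ⟨N₀, hN₀⟩ := hcauchy (ε/R) (by positivity)
  have key : ∀ p q : ℕ, max N₀ 1 ≤ p → p ≤ q → ∀ s ∈ K,
      dist (Dn x 0 p s) (Dn x 0 q s) < ε := by
    intro p q hp hpq s hsK
    rw [dist_eq_norm, norm_sub_rev, Dn_diff hx0 hpq s]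
    have hbd : ∀ i ∈ range (q - p),
        ‖Complex.exp (-(Real.log (((p+i:ℕ):ℝ)+1+x) : ℂ) * s)
          - ∫ t in (((p+i:ℕ):ℝ)+x)..(((p+i:ℕ):ℝ)+1+x), Complex.exp (-(Real.log t : ℂ) * s)‖
        ≤ R * u (p+i) := by
      intro i _
      have hp1 : 1 ≤ p := le_trans (le_max_right _ _) hp
      exact bk_bound hx0 (p+i) (by omega) (hK s hsK) (hR s hsK)
    calc ‖∑ i ∈ range (q-p), (Complex.exp (-(Real.log (((p+i:ℕ):ℝ)+1+x) : ℂ) * s)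
          - ∫ t in (((p+i:ℕ):ℝ)+x)..(((p+i:ℕ):ℝ)+1+x), Complex.exp (-(Real.log t : ℂ) * s))‖
        ≤ ∑ i ∈ range (q-p), R * u (p+i) := norm_sum_le_of_le _ hbd
      _ = R * ∑ i ∈ range (q-p), u (p+i) := by rw [Finset.mul_sum]
      _ ≤ R * dist (∑ k ∈ range q, u k) (∑ k ∈ range p, u k) := by
          apply mul_le_mul_of_nonneg_left _ hR0.le
          rw [← Finset.sum_Ico_eq_sum_range, Finset.sum_Ico_eq_sub _ hpq, Real.dist_eq]
          exact le_abs_self _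
      _ < R * (ε/R) := by
          apply mul_lt_mul_of_pos_left _ hR0
          exact hN₀ q (le_trans (le_trans (le_max_left _ _) hp) hpq)
            p (le_trans (le_max_left _ _) hp)
      _ = ε := by field_simp
  refine ⟨max N₀ 1, ?_⟩
  intro m hm m' hm' s hsK
  rcases le_total m m' with h | h
  · exact key m m' hm h s hsK
  · rw [dist_comm]
    exact key m' m hm' h s hsK

lemma ofReal_inv_eq_exp {t : ℝ} (ht : 0 < t) :
    ((t⁻¹ : ℝ) : ℂ) = Complex.exp (-(Real.log t : ℂ)) := by
  rw [← Complex.ofReal_neg, ← Complex.ofReal_exp, Real.exp_neg, Real.exp_log ht]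

lemma cpow_eq_exp {x : ℝ} (hx0 : 0 < x) (k : ℕ) (s : ℂ) :
    ((k : ℂ) + (x:ℂ)) ^ (-s) = Complex.exp (-(Real.log ((k:ℝ)+x) : ℂ) * s) := by
  have hk : (0:ℝ) < (k:ℝ)+x := by positivity
  have h1 : ((k:ℂ) + (x:ℂ)) = (((k:ℝ)+x : ℝ) : ℂ) := by push_cast; ring
  have hne : ((k:ℂ) + (x:ℂ)) ≠ 0 := by
    rw [h1]
    exact_mod_cast hk.ne'
  rw [Complex.cpow_def_of_ne_zero hne]
  congr 1
  rw [h1, ← Complex.ofReal_log hk.le]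
  ring

lemma summable_exp {x : ℝ} (hx0 : 0 < x) {s : ℂ} (hs : 1 < s.re) :
    Summable (fun k : ℕ => Complex.exp (-(Real.log ((k:ℝ)+x) : ℂ) * s)) := by
  apply Summable.of_norm
  have he : (fun k : ℕ => ‖Complex.exp (-(Real.log ((k:ℝ)+x) : ℂ) * s)‖)
      = fun k : ℕ => ((k:ℝ)+x) ^ (-s.re) :=
    funext fun k => norm_exp_mul (by positivity) s
  rw [he]
  exact summable_aux hx0 hs

lemma psi_eval {x : ℝ} (hx0 : 0 < x) (m : ℕ) {s : ℂ} (hs : s ≠ 1) :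
    (∫ t in (1:ℝ)..((m:ℝ)+x), Complex.exp (-(Real.log t : ℂ) * s))
      = (Complex.exp ((1-s) * (Real.log ((m:ℝ)+x) : ℂ)) - 1)/(1-s) := by
  have hM : (0:ℝ) < (m:ℝ)+x := by positivity
  have hs1 : (1:ℂ) - s ≠ 0 := fun h => hs (by linear_combination -h)
  have hd : ∀ t ∈ Set.uIcc (1:ℝ) ((m:ℝ)+x),
      HasDerivAt (fun t : ℝ => Complex.exp ((1-s) * (Real.log t : ℂ))/(1-s))
        (Complex.exp (-(Real.log t : ℂ) * s)) t := by
    intro t ht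
    have ht0 : (0:ℝ) < t := (lt_min one_pos hM).trans_le ht.1
    have h1 : HasDerivAt (fun t : ℝ => (Real.log t : ℂ)) ((t⁻¹ : ℝ) : ℂ) t :=
      (Real.hasDerivAt_log ht0.ne').ofReal_comp
    have h3 := (h1.const_mul (1-s)).cexp
    have h4 := h3.div_const (1-s)
    refine h4.congr_deriv ?_
    have hr : Complex.exp ((1-s) * (Real.log t : ℂ)) * ((1-s) * ((t⁻¹:ℝ):ℂ)) / (1-s)
        = ((t⁻¹:ℝ):ℂ) * Complex.exp ((1-s) * (Real.log t : ℂ)) := by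
      rw [mul_div_assoc, mul_div_cancel_left₀ _ hs1, mul_comm]
    rw [hr, ofReal_inv_eq_exp ht0, ← Complex.exp_add]
    congr 1
    ring
  rw [intervalIntegral.integral_eq_sub_of_hasDerivAt hd
    (intervalIntegrable_exp s one_pos hM)]
  rw [Real.log_one]
  simp only [Complex.ofReal_zero, mul_zero, Complex.exp_zero]
  rw [sub_div, one_div]

lemma tendsto_Dn_of_re_gt {x : ℝ} (hx0 : 0 < x) {s : ℂ} (hs : 1 < s.re) :
    Filter.Tendsto (fun m : ℕ => Dn x 0 m s) Filter.atTop
      (nhds ((∑' k : ℕ, ((k : ℂ) + (x:ℂ)) ^ (-s)) - 1/(s-1))) := by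
  unfold Dn
  simp only [pow_zero, one_mul]
  apply Filter.Tendsto.sub
  · have hfe : (fun k : ℕ => ((k : ℂ) + (x:ℂ)) ^ (-s))
        = fun k : ℕ => Complex.exp (-(Real.log ((k:ℝ)+x) : ℂ) * s) :=
      funext fun k => cpow_eq_exp hx0 k s
    have hsm : Summable (fun k : ℕ => ((k : ℂ) + (x:ℂ)) ^ (-s)) := by
      rw [hfe]; exact summable_exp hx0 hs
    have h2 := hsm.hasSum.tendsto_sum_nat
    rw [hfe] at h2
    rw [hfe]
    exact h2.comp (Filter.tendsto_add_atTop_nat 1)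
  · have hs1 : s ≠ 1 := fun h => by rw [h] at hs; simp at hs
    have hs1' : (1:ℂ) - s ≠ 0 := fun h => hs1 (by linear_combination -h)
    simp only [psi_eval hx0 _ hs1]
    have hlim : Filter.Tendsto
        (fun m : ℕ => Complex.exp ((1-s) * (Real.log ((m:ℝ)+x) : ℂ)))
        Filter.atTop (nhds 0) := by
      rw [tendsto_zero_iff_norm_tendsto_zero]
      have hn : (fun m : ℕ => ‖Complex.exp ((1-s) * (Real.log ((m:ℝ)+x) : ℂ))‖)
          = fun m : ℕ => Real.exp ((1 - s.re) * Real.log ((m:ℝ)+x)) := by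
        funext m
        rw [Complex.norm_exp]
        congr 1
        simp [Complex.mul_re]
      rw [hn]
      apply Real.tendsto_exp_atBot.comp
      have hL : Filter.Tendsto (fun m : ℕ => Real.log ((m:ℝ)+x)) Filter.atTop Filter.atTop :=
        Real.tendsto_log_atTop.comp
          (Filter.tendsto_atTop_add_const_right _ x tendsto_natCast_atTop_atTop)
      exact hL.const_mul_atTop_of_neg (by linarith)
    have hs2 : s - 1 ≠ 0 := fun h => hs1 (by linear_combination h)
    have h5 : Filter.Tendsto
        (fun m : ℕ => (Complex.exp ((1-s) * (Real.log ((m:ℝ)+x) : ℂ)) - 1)/(1-s))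
        Filter.atTop (nhds ((0-1)/(1-s))) :=
      (hlim.sub (tendsto_const_nhds (x := (1:ℂ)))).div_const (1-s)
    convert h5 using 2
    field_simp
    ring

end SC

open SC in
/-- Berndt's formula for the generalized Stieltjes constants: if `F` is the entire
continuation of `ζ(s,x) - 1/(s-1)`, so that `γ_n(x) = (-1)^n F⁽ⁿ⁾(1)` is the `n`-th
generalized Stieltjes constant from the Laurent expansion of `ζ(s,x)` at `s = 1`, then
`γ_n(x) = lim_{m→∞} (Σ_{k=0}^m log^n(k+x)/(k+x) - log^{n+1}(m+x)/(n+1))` for `0 < x ≤ 1`. -/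
theorem stieltjes_constant_limit (x : ℝ) (hx0 : 0 < x) (hx1 : x ≤ 1) (n : ℕ)
    (F : ℂ → ℂ) (hF : Differentiable ℂ F)
    (hFeq : ∀ s : ℂ, 1 < s.re →
      F s = (∑' k : ℕ, ((k : ℂ) + (x : ℂ)) ^ (-s)) - 1 / (s - 1)) :
    Filter.Tendsto (fun m : ℕ =>
        (((∑ k ∈ Finset.range (m + 1), (Real.log ((k : ℝ) + x)) ^ n / ((k : ℝ) + x)) -
          (Real.log ((m : ℝ) + x)) ^ (n + 1) / ((n : ℝ) + 1) : ℝ) : ℂ))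
      Filter.atTop (nhds ((-1 : ℂ) ^ n * iteratedDeriv n F 1)) := by
  classical
  set U : Set ℂ := {s : ℂ | (1:ℝ)/2 < s.re} with hUdef
  have hUo : IsOpen U := isOpen_lt continuous_const Complex.continuous_re
  have h1U : (1:ℂ) ∈ U := by
    simp only [hUdef, Set.mem_setOf_eq, Complex.one_re]
    norm_num
  have hUC : ∀ K : Set ℂ, K ⊆ U → IsCompact K →
      UniformCauchySeqOn (fun m s => Dn x 0 m s) Filter.atTop K := by
    intro K hKU hKc
    obtain ⟨r, hr⟩ := (Metric.isBounded_iff_subset_closedBall 0).1 hKc.isBounded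
    refine unif_cauchy hx0 (fun s hs => (hKU hs).le) (R := max r 1)
      (fun s hs => ?_) (lt_of_lt_of_le one_pos (le_max_right _ _))
    have := hr hs
    rw [Metric.mem_closedBall, dist_zero_right] at this
    exact this.trans (le_max_left _ _)
  have hcs : ∀ s ∈ U, CauchySeq (fun m => Dn x 0 m s) := fun s hs =>
    (hUC {s} (Set.singleton_subset_iff.2 hs) isCompact_singleton).cauchySeq rfl
  set G : ℂ → ℂ := fun s => Filter.limUnder Filter.atTop (fun m => Dn x 0 m s) with hGdef
  have hptw : ∀ s ∈ U, Filter.Tendsto (fun m => Dn x 0 m s) Filter.atTop (nhds (G s)) :=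
    fun s hs => (hcs s hs).tendsto_limUnder
  have hTLU : TendstoLocallyUniformlyOn (fun m s => Dn x 0 m s) G Filter.atTop U :=
    (tendstoLocallyUniformlyOn_iff_forall_isCompact hUo).2
      (fun K hKU hKc => (hUC K hKU hKc).tendstoUniformlyOn_of_tendsto
        (fun s hs => hptw s (hKU hs)))
  have hEm : ∀ m : ℕ, DifferentiableOn ℂ (Dn x 0 m) U := fun m s _ =>
    ((hasDerivAt_Dn hx0 0 m s).differentiableAt).differentiableWithinAt
  have hgt : ∀ s : ℂ, 1 < s.re → G s = F s := by
    intro s hs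
    have hsU : s ∈ U := by
      simp only [hUdef, Set.mem_setOf_eq]
      linarith
    rw [hFeq s hs]
    exact tendsto_nhds_unique (hptw s hsU) (tendsto_Dn_of_re_gt hx0 hs)
  have hEqU : Set.EqOn G F U := by
    have hGa : AnalyticOnNhd ℂ G U :=
      (hTLU.differentiableOn (Filter.Eventually.of_forall hEm) hUo).analyticOnNhd hUo
    have hFa : AnalyticOnNhd ℂ F U := (hF.differentiableOn).analyticOnNhd hUo
    have hpre : IsPreconnected U := (convex_halfSpace_re_gt ((1:ℝ)/2)).isPreconnected
    have h2U : (2:ℂ) ∈ U := by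
      simp only [hUdef, Set.mem_setOf_eq]
      norm_num [Complex.re_ofNat]
    apply hGa.eqOn_of_preconnected_of_eventuallyEq hFa hpre h2U
    have hopen : IsOpen {s : ℂ | 1 < s.re} := isOpen_lt continuous_const Complex.continuous_re
    have hmem : {s : ℂ | 1 < s.re} ∈ nhds (2:ℂ) := hopen.mem_nhds (by
      simp only [Set.mem_setOf_eq]
      norm_num [Complex.re_ofNat])
    exact Filter.eventually_of_mem hmem (fun s hs => hgt s hs)
  have hTLUF : TendstoLocallyUniformlyOn (fun m s => Dn x 0 m s) F Filter.atTop U :=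
    hTLU.congr_right hEqU
  have hDer : ∀ j : ℕ, TendstoLocallyUniformlyOn
      (fun (m : ℕ) (s : ℂ) => iteratedDeriv j (Dn x 0 m) s)
      (iteratedDeriv j F) Filter.atTop U := by
    intro j
    induction j with
    | zero => simpa using hTLUF
    | succ j ih =>
      have hdiff : ∀ᶠ m in Filter.atTop,
          DifferentiableOn ℂ (fun s => iteratedDeriv j (Dn x 0 m) s) U :=
        Filter.Eventually.of_forall (fun m => by
          have he : (fun s => iteratedDeriv j (Dn x 0 m) s) = Dn x j m :=
            funext (iteratedDeriv_Dn hx0 j m)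
          rw [he]
          exact fun s _ =>
            ((hasDerivAt_Dn hx0 j m s).differentiableAt).differentiableWithinAt)
      have hstep := ih.deriv hdiff hUo
      have he1 : (deriv ∘ fun (m : ℕ) (s : ℂ) => iteratedDeriv j (Dn x 0 m) s)
          = fun (m : ℕ) (s : ℂ) => iteratedDeriv (j+1) (Dn x 0 m) s := by
        funext m
        simp only [Function.comp]
        rw [← iteratedDeriv_succ]
      have he2 : deriv (iteratedDeriv j F) = iteratedDeriv (j+1) F :=
        (iteratedDeriv_succ).symm
      rw [he1, he2] at hstep
      exact hstep
  have htd := (hDer n).tendsto_at h1U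
  have hval : ∀ m : ℕ, iteratedDeriv n (Dn x 0 m) 1
      = (-1:ℂ)^n * ((((∑ k ∈ Finset.range (m + 1), (Real.log ((k : ℝ) + x)) ^ n / ((k : ℝ) + x)) -
          (Real.log ((m : ℝ) + x)) ^ (n + 1) / ((n : ℝ) + 1) : ℝ)) : ℂ) := fun m => by
    rw [iteratedDeriv_Dn hx0 n m 1, Dn_one hx0 n m]
  have hfinal := htd.const_mul ((-1:ℂ)^n)
  apply hfinal.congr
  intro m
  rw [hval m, ← mul_assoc, ← mul_pow, neg_mul_neg, one_mul, one_pow, one_mul]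
end
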